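/- arXiv:2006.00475 — 6 statements merged into one kernel-verified Lean document; each statement's English description precedes it below -/
import Mathlib

section
/- Let $f, g : \mathcal{D} \to \mathbb{R}$ be convex functions on a convex body $\mathcal{D} \subset \mathbb{R}^d$, with $f$ minimised at $x_\star$ and $f_\star \le g_\star$ (minima over $\mathcal{D}$). Let $\epsilon > 0$ and $K = \{x \in \mathcal{D} : g(x) \le g_\star + \epsilon\}$, and suppose $x_\star \notin K$. If $x, y \in \partial K$ with $g(x) = g_\star + \epsilon$, $g(y) \le g_\star + \epsilon$, and $x = \psi x_\star + (1-\psi) y$ for some $\psi \in (0,1)$, then $(f(x) - g(x))^2 + (f(y) - g(y))^2 \ge \tfrac{1}{2}\psi^2 (g_\star + \epsilon - f_\star)^2$. -/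
open Set

theorem line_of_sight {d : ℕ} (D : Set (EuclideanSpace ℝ (Fin d)))
    (hDc : IsCompact D) (hDconv : Convex ℝ D) (hDint : (interior D).Nonempty)
    (f g : EuclideanSpace ℝ (Fin d) → ℝ)
    (hf : ConvexOn ℝ D f) (hg : ConvexOn ℝ D g)
    (xstar : EuclideanSpace ℝ (Fin d)) (hxs : xstar ∈ D) (hmin : IsMinOn f D xstar)
    (hfg : sInf (f '' D) ≤ sInf (g '' D))
    (ε : ℝ) (hε : 0 < ε)
    (hxsK : xstar ∉ {p ∈ D | g p ≤ sInf (g '' D) + ε})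
    (x y : EuclideanSpace ℝ (Fin d)) (hx : x ∈ D) (hy : y ∈ D)
    (hgx : g x = sInf (g '' D) + ε) (hgy : g y ≤ sInf (g '' D) + ε)
    (ψ : ℝ) (hψ : ψ ∈ Ioo (0 : ℝ) 1)
    (hxy : x = ψ • xstar + (1 - ψ) • y) :
    (f x - g x) ^ 2 + (f y - g y) ^ 2
      ≥ (1 / 2) * ψ ^ 2 * (sInf (g '' D) + ε - sInf (f '' D)) ^ 2 := by
  obtain ⟨hψ0, hψ1⟩ := hψ
  -- f xstar ≤ sInf (f '' D)
  have hFs : f xstar ≤ sInf (f '' D) := by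
    apply le_csInf (Set.Nonempty.image f ⟨xstar, hxs⟩)
    rintro b ⟨z, hz, rfl⟩
    exact hmin hz
  -- convexity bound
  have hconv : f x ≤ ψ * f xstar + (1 - ψ) * f y := by
    have h := hf.2 hxs hy hψ0.le (by linarith : (0:ℝ) ≤ 1 - ψ)
      (by ring : ψ + (1 - ψ) = 1)
    simp only [smul_eq_mul] at h
    rwa [hxy]
  set F := sInf (f '' D)
  set G := sInf (g '' D)
  have key : (1 - ψ) * (f y - g y) - (f x - g x) ≥ ψ * (G + ε - F) := by
    have h1 : f x - g x ≤ ψ * F + (1 - ψ) * f y - (G + ε) := by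
      rw [hgx]; nlinarith
    nlinarith
  have hc : 0 < G + ε - F := by linarith
  have h2 : (ψ * (G + ε - F)) ^ 2 ≤ ((1 - ψ) * (f y - g y) - (f x - g x)) ^ 2 :=
    pow_le_pow_left₀ (mul_pos hψ0 hc).le key 2
  nlinarith [h2, sq_nonneg (f x - g x + (1 - ψ) * (f y - g y)),
    mul_nonneg (mul_nonneg hψ0.le (by linarith : (0:ℝ) ≤ 2 - ψ)) (sq_nonneg (f y - g y))]
end

section
/- Suppose $\mathscr{F} = \bigcup_{i=1}^k \mathscr{F}_i$ and for each $i$ there is a probability measure $\rho_i$ on $\mathcal{K}$ such that for all $f \in \mathscr{F}_i$: $\int_{\mathcal{K}} \bar f \, d\rho_i - f_\star \le \alpha + \sqrt{\beta \int_{\mathcal{K}} (\bar f - f)^2 \, d\rho_i}$. Then for any finitely supported probability distribution $\mu$ on $\mathscr{F}$, the mixture $\rho = \sum_{i=1}^k \mu(\mathscr{F}_i)\, \rho_i$ (with the $\mathscr{F}_i$ made disjoint) satisfies $\int_{\mathcal{K}} \bar f \, d\rho - \int_{\mathscr{F}} f_\star \, d\mu(f) \le \alpha + \sqrt{\beta k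 \int_{\mathscr{F}} \int_{\mathcal{K}} (\bar f - f)^2 \, d\rho \, d\mu(f)}$. -/
open MeasureTheory Set

/-- Cauchy–Schwarz in the form `∑ √(a b) ≤ √(∑ a) * √(∑ b)`. -/
lemma sum_sqrt_mul_le {ι : Type*} (s : Finset ι) (a b : ι → ℝ)
    (ha : ∀ i ∈ s, 0 ≤ a i) (hb : ∀ i ∈ s, 0 ≤ b i) :
    ∑ i ∈ s, Real.sqrt (a i * b i) ≤ Real.sqrt ((∑ i ∈ s, a i) * ∑ i ∈ s, b i) := by
  have h := Finset.sum_sq_le_sum_mul_sum_of_sq_eq_mul s (r := fun i => Real.sqrt (a i * b i))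
    ha hb (fun i hi => Real.sq_sqrt (mul_nonneg (ha i hi) (hb i hi)))
  have hnn : 0 ≤ ∑ i ∈ s, Real.sqrt (a i * b i) :=
    Finset.sum_nonneg fun i _ => Real.sqrt_nonneg _
  calc ∑ i ∈ s, Real.sqrt (a i * b i)
      = Real.sqrt ((∑ i ∈ s, Real.sqrt (a i * b i)) ^ 2) := (Real.sqrt_sq hnn).symm
    _ ≤ _ := Real.sqrt_le_sqrt h

theorem combine_exploratory {d k : ℕ}
    (K : Set (EuclideanSpace ℝ (Fin d)))
    (hKc : IsCompact K) (hKconv : Convex ℝ K) (hKint : (interior K).Nonempty)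
    (hKm : MeasurableSet K)
    -- the pieces of the partition `𝓕 = ⋃ i, 𝓕 i`, made disjoint
    (F : Fin k → Set (EuclideanSpace ℝ (Fin d) → ℝ))
    (hFdisj : Pairwise (Function.onFun Disjoint F))
    -- all functions in `𝓕` are measurable and `[0,1]`-valued on `K`
    (hFmeas : ∀ f ∈ ⋃ i, F i, Measurable f ∧ ∀ x ∈ K, f x ∈ Icc (0 : ℝ) 1)
    (fbar : EuclideanSpace ℝ (Fin d) → ℝ) (hfbar : fbar ∈ ⋃ i, F i)
    (α β : ℝ) (hα : 0 ≤ α) (hβ : 0 ≤ β)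
    -- the exploratory distributions for the pieces
    (ρ : Fin k → Measure (EuclideanSpace ℝ (Fin d)))
    (hρ : ∀ i, IsProbabilityMeasure (ρ i))
    (hexp : ∀ i, ∀ f ∈ F i,
      (∫ x in K, fbar x ∂(ρ i)) - sInf (f '' K)
        ≤ α + Real.sqrt (β * ∫ x in K, (fbar x - f x) ^ 2 ∂(ρ i)))
    -- a finitely supported probability distribution `μ` on `𝓕`,
    -- given by its support `S` and weights `w`
    (S : Finset (EuclideanSpace ℝ (Fin d) → ℝ)) (hS : ↑S ⊆ ⋃ i, F i)
    (w : (EuclideanSpace ℝ (Fin d) → ℝ) → ℝ)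
    (hw : ∀ f ∈ S, 0 ≤ w f) (hwsum : ∑ f ∈ S, w f = 1) :
    (∫ x in K, fbar x
        ∂(∑ i : Fin k, (ENNReal.ofReal (∑ f ∈ S, (F i).indicator w f)) • ρ i))
      - ∑ f ∈ S, w f * sInf (f '' K)
      ≤ α + Real.sqrt (β * k * ∑ f ∈ S, w f *
          ∫ x in K, (fbar x - f x) ^ 2
            ∂(∑ i : Fin k, (ENNReal.ofReal (∑ f ∈ S, (F i).indicator w f)) • ρ i)) := by
  classical
  obtain ⟨i0, hi0⟩ := mem_iUnion.1 hfbar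
  set q : Fin k → ℝ := fun i => ∑ f ∈ S, (F i).indicator w f with hqdef
  set ρmix : Measure (EuclideanSpace ℝ (Fin d)) := ∑ i : Fin k, (ENNReal.ofReal (q i)) • ρ i with hρmix
  -- nonnegativity of the weights q
  have hq : ∀ i, 0 ≤ q i := by
    intro i
    refine Finset.sum_nonneg fun f hf => ?_
    by_cases hfi : f ∈ F i
    · simpa [Set.indicator_of_mem hfi] using hw f hf
    · simp [Set.indicator_of_notMem hfi]
  -- the index of the piece containing f
  let idx : (EuclideanSpace ℝ (Fin d) → ℝ) → Fin k := fun f => if h : ∃ i, f ∈ F i then h.choose else i0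
  have hidx_mem : ∀ f, f ∈ (⋃ i, F i) → f ∈ F (idx f) := by
    intro f hf
    obtain ⟨i, hi⟩ := mem_iUnion.1 hf
    have h : ∃ j, f ∈ F j := ⟨i, hi⟩
    simp only [idx, dif_pos h]
    exact h.choose_spec
  have hidx_unique : ∀ f i, f ∈ (⋃ j, F j) → (f ∈ F i ↔ idx f = i) := by
    intro f i hf
    constructor
    · intro hfi
      by_contra hne
      exact (hFdisj hne).le_bot ⟨hidx_mem f hf, hfi⟩ |>.elim
    · intro h; rw [← h]; exact hidx_mem f hf
  -- q i as a sum over the fiber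
  have hqfiber : ∀ i, q i = ∑ f ∈ S.filter (fun f => idx f = i), w f := by
    intro i
    rw [hqdef, Finset.sum_filter]
    refine Finset.sum_congr rfl fun f hf => ?_
    have hfU : f ∈ ⋃ j, F j := hS hf
    by_cases hfi : f ∈ F i
    · rw [Set.indicator_of_mem hfi, if_pos ((hidx_unique f i hfU).1 hfi)]
    · rw [Set.indicator_of_notMem hfi, if_neg (fun h => hfi ((hidx_unique f i hfU).2 h))]
  -- integrability of bounded measurable functions
  have hint : ∀ (g : EuclideanSpace ℝ (Fin d) → ℝ), Measurable g → (∀ x ∈ K, ‖g x‖ ≤ 1) → ∀ i,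
      IntegrableOn g K (ρ i) := by
    intro g hg hb i
    have := hρ i
    exact Measure.integrableOn_of_bounded (measure_ne_top _ _) hg.aestronglyMeasurable
      ((ae_restrict_iff' hKm).2 (Filter.Eventually.of_forall hb))
  -- integral against the mixture
  have hmix : ∀ (g : EuclideanSpace ℝ (Fin d) → ℝ), (∀ i, IntegrableOn g K (ρ i)) →
      ∫ x in K, g x ∂ρmix = ∑ i : Fin k, q i * ∫ x in K, g x ∂(ρ i) := by
    intro g hg
    have hres : ρmix.restrict K = ∑ i : Fin k, (ENNReal.ofReal (q i)) • (ρ i).restrict K := by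
      ext s hs
      simp [hρmix, Measure.restrict_apply hs, Measure.finset_sum_apply, Measure.smul_apply,
        smul_eq_mul]
    rw [show (∫ x in K, g x ∂ρmix) = ∫ x, g x ∂(ρmix.restrict K) from rfl, hres,
      integral_finset_sum_measure (fun i _ => (hg i).smul_measure ENNReal.ofReal_ne_top)]
    refine Finset.sum_congr rfl fun i _ => ?_
    rw [integral_smul_measure, ENNReal.toReal_ofReal (hq i), smul_eq_mul]
  -- bounds and measurability of the relevant integrands
  obtain ⟨hfbarm, hfbarb⟩ := hFmeas fbar hfbar
  have hfbar_bd : ∀ x ∈ K, ‖fbar x‖ ≤ 1 := by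
    intro x hx
    have := hfbarb x hx
    rw [Real.norm_eq_abs, abs_le]; constructor <;> [linarith [this.1]; exact this.2]
  have hfbar_int : ∀ i, IntegrableOn fbar K (ρ i) := hint fbar hfbarm hfbar_bd
  have hsq_meas : ∀ f ∈ S, Measurable (fun x => (fbar x - f x) ^ 2) := by
    intro f hf
    exact ((hfbarm.sub (hFmeas f (hS hf)).1).pow_const 2)
  have hsq_bd : ∀ f ∈ S, ∀ x ∈ K, ‖(fbar x - f x) ^ 2‖ ≤ 1 := by
    intro f hf x hx
    have h1 := hfbarb x hx
    have h2 := (hFmeas f (hS hf)).2 x hx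
    rw [Real.norm_eq_abs, abs_of_nonneg (sq_nonneg _)]
    nlinarith [h1.1, h1.2, h2.1, h2.2]
  have hsq_int : ∀ f ∈ S, ∀ i, IntegrableOn (fun x => (fbar x - f x) ^ 2) K (ρ i) :=
    fun f hf => hint _ (hsq_meas f hf) (hsq_bd f hf)
  have hsq_nonneg : ∀ (f : EuclideanSpace ℝ (Fin d) → ℝ) (i : Fin k), 0 ≤ ∫ x in K, (fbar x - f x) ^ 2 ∂(ρ i) :=
    fun f i => setIntegral_nonneg hKm fun x _ => sq_nonneg _
  -- notation
  set A : Fin k → ℝ := fun i => ∫ x in K, fbar x ∂(ρ i) with hA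
  set V : (EuclideanSpace ℝ (Fin d) → ℝ) → ℝ := fun f => ∫ x in K, (fbar x - f x) ^ 2 ∂(ρ (idx f)) with hV
  set W : (EuclideanSpace ℝ (Fin d) → ℝ) → ℝ := fun f => ∫ x in K, (fbar x - f x) ^ 2 ∂ρmix with hW
  have hWval : ∀ f ∈ S, W f = ∑ i : Fin k, q i * ∫ x in K, (fbar x - f x) ^ 2 ∂(ρ i) :=
    fun f hf => hmix _ (hsq_int f hf)
  have hWge : ∀ f ∈ S, q (idx f) * V f ≤ W f := by
    intro f hf
    rw [hWval f hf]
    exact Finset.single_le_sum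
      (f := fun i => q i * ∫ x in K, (fbar x - f x) ^ 2 ∂(ρ i))
      (fun i _ => mul_nonneg (hq i) (hsq_nonneg f i)) (Finset.mem_univ (idx f))
  have hWnn : ∀ f ∈ S, 0 ≤ W f :=
    fun f hf => setIntegral_nonneg hKm fun x _ => sq_nonneg _
  have hVnn : ∀ f, 0 ≤ V f := fun f => hsq_nonneg f (idx f)
  -- the LHS integral
  have hLHS : ∫ x in K, fbar x ∂ρmix = ∑ f ∈ S, w f * A (idx f) := by
    rw [hmix fbar hfbar_int]
    have : ∀ i : Fin k, q i * A i = ∑ f ∈ S.filter (fun f => idx f = i), w f * A i := by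
      intro i; rw [hqfiber i, Finset.sum_mul]
    refine (Finset.sum_congr rfl fun i _ => this i).trans ?_
    rw [← Finset.sum_fiberwise_of_maps_to (g := idx) (t := Finset.univ)
      (fun f _ => Finset.mem_univ _) (fun f => w f * A (idx f))]
    refine Finset.sum_congr rfl fun i _ => Finset.sum_congr rfl fun f hf => ?_
    rw [(Finset.mem_filter.1 hf).2]
  -- apply the hypothesis pointwise
  have hstep1 : (∫ x in K, fbar x ∂ρmix) - ∑ f ∈ S, w f * sInf (f '' K)
      ≤ α + ∑ f ∈ S, w f * Real.sqrt (β * V f) := by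
    rw [hLHS, ← Finset.sum_sub_distrib]
    have : ∑ f ∈ S, (w f * A (idx f) - w f * sInf (f '' K))
        ≤ ∑ f ∈ S, w f * (α + Real.sqrt (β * V f)) := by
      refine Finset.sum_le_sum fun f hf => ?_
      rw [← mul_sub]
      exact mul_le_mul_of_nonneg_left
        (hexp (idx f) f (hidx_mem f (hS hf))) (hw f hf)
    refine this.trans ?_
    simp_rw [mul_add, Finset.sum_add_distrib, ← Finset.sum_mul, hwsum, one_mul]
    exact le_refl _
  -- Cauchy–Schwarz per piece, then over pieces
  have hstep2 : ∑ f ∈ S, w f * Real.sqrt (β * V f)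
      ≤ Real.sqrt (β * k * ∑ f ∈ S, w f * W f) := by
    have hfib : ∑ f ∈ S, w f * Real.sqrt (β * V f)
        = ∑ i : Fin k, ∑ f ∈ S.filter (fun f => idx f = i), w f * Real.sqrt (β * V f) :=
      (Finset.sum_fiberwise_of_maps_to (fun f _ => Finset.mem_univ _) _).symm
    rw [hfib]
    have hperi : ∀ i : Fin k, ∑ f ∈ S.filter (fun f => idx f = i), w f * Real.sqrt (β * V f)
        ≤ Real.sqrt (q i * ∑ f ∈ S.filter (fun f => idx f = i), w f * (β * V f)) := by
      intro i
      rw [hqfiber i]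
      have := sum_sqrt_mul_le (S.filter (fun f => idx f = i))
        (fun f => w f) (fun f => w f * (β * V f))
        (fun f hf => hw f (Finset.mem_filter.1 hf).1)
        (fun f hf => mul_nonneg (hw f (Finset.mem_filter.1 hf).1)
          (mul_nonneg hβ (hVnn f)))
      refine le_trans (le_of_eq ?_) this
      refine Finset.sum_congr rfl fun f hf => ?_
      have hwf := hw f (Finset.mem_filter.1 hf).1
      rw [show w f * (w f * (β * V f)) = w f ^ 2 * (β * V f) by ring,
        Real.sqrt_mul (sq_nonneg _), Real.sqrt_sq hwf]
    calc ∑ i : Fin k, ∑ f ∈ S.filter (fun f => idx f = i), w f * Real.sqrt (β * V f)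
        ≤ ∑ i : Fin k, Real.sqrt (q i * ∑ f ∈ S.filter (fun f => idx f = i), w f * (β * V f)) :=
          Finset.sum_le_sum fun i _ => hperi i
      _ = ∑ i : Fin k, Real.sqrt ((1 : ℝ) *
            (q i * ∑ f ∈ S.filter (fun f => idx f = i), w f * (β * V f))) := by
          simp
      _ ≤ Real.sqrt ((∑ _i : Fin k, (1 : ℝ)) *
            ∑ i : Fin k, q i * ∑ f ∈ S.filter (fun f => idx f = i), w f * (β * V f)) := by
          refine sum_sqrt_mul_le _ _ _ (fun _ _ => zero_le_one) (fun i _ => ?_)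
          exact mul_nonneg (hq i) (Finset.sum_nonneg fun f hf =>
            mul_nonneg (hw f (Finset.mem_filter.1 hf).1) (mul_nonneg hβ (hVnn f)))
      _ ≤ Real.sqrt (β * k * ∑ f ∈ S, w f * W f) := by
          refine Real.sqrt_le_sqrt ?_
          have hsum1 : (∑ _i : Fin k, (1 : ℝ)) = (k : ℝ) := by simp
          rw [hsum1]
          have hkey : ∑ i : Fin k, q i * ∑ f ∈ S.filter (fun f => idx f = i), w f * (β * V f)
              ≤ β * ∑ f ∈ S, w f * W f := by
            have h1 : ∀ i : Fin k,
                q i * ∑ f ∈ S.filter (fun f => idx f = i), w f * (β * V f)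
                = ∑ f ∈ S.filter (fun f => idx f = i), β * (w f * (q (idx f) * V f)) := by
              intro i
              rw [Finset.mul_sum]
              refine Finset.sum_congr rfl fun f hf => ?_
              rw [(Finset.mem_filter.1 hf).2]; ring
            simp_rw [h1]
            rw [Finset.sum_fiberwise_of_maps_to (fun f _ => Finset.mem_univ _)
              (fun f => β * (w f * (q (idx f) * V f))), ← Finset.mul_sum]
            refine mul_le_mul_of_nonneg_left ?_ hβ
            exact Finset.sum_le_sum fun f hf =>
              mul_le_mul_of_nonneg_left (hWge f hf) (hw f hf)
          calc (k : ℝ) * ∑ i : Fin k, q i *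
                ∑ f ∈ S.filter (fun f => idx f = i), w f * (β * V f)
              ≤ (k : ℝ) * (β * ∑ f ∈ S, w f * W f) :=
                mul_le_mul_of_nonneg_left hkey (Nat.cast_nonneg k)
            _ = β * k * ∑ f ∈ S, w f * W f := by ring
  calc (∫ x in K, fbar x ∂ρmix) - ∑ f ∈ S, w f * sInf (f '' K)
      ≤ α + ∑ f ∈ S, w f * Real.sqrt (β * V f) := hstep1
    _ ≤ α + Real.sqrt (β * k * ∑ f ∈ S, w f * W f) := by linarith [hstep2]
end

section
/- Let $K \subset \mathbb{R}^d$ be a convex body with $0 \in K$, and let $x \notin K$. For $z$ in the shadow $P_x(K)$ (the orthogonal projection of $K$ onto the hyperplane $x^\perp$), define $\Psi_K(x,z)$ as the ratio of the length of $K \cap [x, \pi_K(x,z)]$ to the length of the chord $[x, \pi_K(x,z)]$, where $\pi_K(x,z)$ is the point of $K$ on the line $\{z + tx : t \in \mathbb{R}\}$ minimising $\langle y, x\rangle$. Then $z \mapsto \Psi_K(x,z)$ is concave on $P_x(K)$. -/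
open MeasureTheory Set

/-- Orthogonal projection of `y` onto the hyperplane `x^⊥`. -/
noncomputable def projHyp {d : ℕ} (x y : EuclideanSpace ℝ (Fin d)) : EuclideanSpace ℝ (Fin d) :=
  (Submodule.orthogonalProjection (Submodule.span ℝ {x})ᗮ y : EuclideanSpace ℝ (Fin d))

/-- The shadow of `K` in direction `x`: projection of `K` onto `x^⊥`. -/
noncomputable def shadow {d : ℕ} (K : Set (EuclideanSpace ℝ (Fin d)))
    (x : EuclideanSpace ℝ (Fin d)) : Set (EuclideanSpace ℝ (Fin d)) :=
  projHyp x '' K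

/-- The point of `K` on the line `{z + t x : t ∈ ℝ}` minimising `⟨y, x⟩`. -/
noncomputable def piK {d : ℕ} (K : Set (EuclideanSpace ℝ (Fin d)))
    (x z : EuclideanSpace ℝ (Fin d)) : EuclideanSpace ℝ (Fin d) :=
  z + (sInf {t : ℝ | z + t • x ∈ K}) • x

/-- The depth/distance ratio `Ψ_K(x, z)`: the ratio of the one-dimensional Hausdorff
measure of `K ∩ [x, π_K(x,z)]` to the length of the chord `[x, π_K(x,z)]`. -/
noncomputable def PsiPt {d : ℕ} (K : Set (EuclideanSpace ℝ (Fin d)))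
    (x z : EuclideanSpace ℝ (Fin d)) : ℝ :=
  ((μH[1] (K ∩ segment ℝ x (piK K x z))) / (μH[1] (segment ℝ x (piK K x z)))).toReal

namespace PsiAux

variable {d : ℕ}

variable (d) in
private abbrev E := EuclideanSpace ℝ (Fin d)

/-- `aF K x z` is the lowest parameter of `K` along the line through `z` in direction `x`. -/
noncomputable def aF (K : Set (E d)) (x z : E d) : ℝ := sInf {t : ℝ | z + t • x ∈ K}

lemma piK_eq (K : Set (E d)) (x z : E d) : piK K x z = z + (aF K x z) • x := rfl

/-- The chord parametrisation and the set of chord parameters lying in `K`. -/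
noncomputable def chord (K : Set (E d)) (x z : E d) (l : ℝ) : E d := x + l • (piK K x z - x)

noncomputable def Sset (K : Set (E d)) (x z : E d) : Set ℝ :=
  {l : ℝ | l ∈ Icc (0:ℝ) 1 ∧ chord K x z l ∈ K}

noncomputable def lam0 (K : Set (E d)) (x z : E d) : ℝ := sInf (Sset K x z)

section Facts

variable {K : Set (E d)} {x : E d}

lemma x_ne_zero (h0 : (0 : E d) ∈ K) (hx : x ∉ K) : x ≠ 0 := by
  rintro rfl; exact hx h0

/-- Every point of `K` decomposes as its shadow point plus a multiple of `x`. -/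
lemma exists_decomp (y : E d) : ∃ c : ℝ, y = projHyp x y + c • x := by
  have h := Submodule.sub_starProjection_mem_orthogonal (K := (Submodule.span ℝ {x})ᗮ) y
  rw [Submodule.orthogonal_orthogonal] at h
  rcases Submodule.mem_span_singleton.mp h with ⟨c, hc⟩
  refine ⟨c, ?_⟩
  rw [hc]
  simp only [projHyp, Submodule.starProjection_apply]
  abel

lemma mem_shadow_nonempty {z : E d} (hz : z ∈ shadow K x) :
    {t : ℝ | z + t • x ∈ K}.Nonempty := by
  obtain ⟨y, hyK, hyz⟩ := hz
  obtain ⟨c, hc⟩ := exists_decomp (x := x) y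
  exact ⟨c, by rw [hyz] at hc; show z + c • x ∈ K; rw [← hc]; exact hyK⟩

lemma Aset_isClosed (hKc : IsCompact K) (z : E d) : IsClosed {t : ℝ | z + t • x ∈ K} := by
  have : Continuous fun t : ℝ => z + t • x :=
    continuous_const.add (continuous_id.smul continuous_const)
  exact hKc.isClosed.preimage this

lemma Aset_bddBelow (hKc : IsCompact K) (h0 : (0 : E d) ∈ K) (hx : x ∉ K) (z : E d) :
    BddBelow {t : ℝ | z + t • x ∈ K} := by
  obtain ⟨R, hR⟩ := hKc.isBounded.subset_closedBall 0
  have hxn : (0:ℝ) < ‖x‖ := norm_pos_iff.mpr (x_ne_zero h0 hx)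
  refine ⟨-((R + ‖z‖) / ‖x‖), fun t ht => ?_⟩
  have h1 : ‖z + t • x‖ ≤ R := by simpa using hR ht
  have h2 : |t| * ‖x‖ ≤ R + ‖z‖ := by
    have : ‖t • x‖ ≤ ‖z + t • x‖ + ‖z‖ := by
      calc ‖t • x‖ = ‖(z + t • x) - z‖ := by rw [add_sub_cancel_left]
        _ ≤ ‖z + t • x‖ + ‖z‖ := norm_sub_le _ _
    rw [norm_smul, Real.norm_eq_abs] at this
    linarith
  have h3 : |t| ≤ (R + ‖z‖) / ‖x‖ := (le_div_iff₀ hxn).mpr h2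
  have := neg_abs_le t
  linarith

lemma piK_mem (hKc : IsCompact K) (h0 : (0 : E d) ∈ K) (hx : x ∉ K)
    {z : E d} (hz : z ∈ shadow K x) : piK K x z ∈ K :=
  (Aset_isClosed hKc z).csInf_mem (mem_shadow_nonempty hz) (Aset_bddBelow hKc h0 hx z)

lemma aF_le (hKc : IsCompact K) (h0 : (0 : E d) ∈ K) (hx : x ∉ K)
    {z : E d} {t : ℝ} (ht : z + t • x ∈ K) : aF K x z ≤ t :=
  csInf_le (Aset_bddBelow hKc h0 hx z) ht

lemma shadow_convex (hKconv : Convex ℝ K) : Convex ℝ (shadow K x) := by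
  have : shadow K x =
      ((Submodule.span ℝ {x})ᗮ.subtype ∘ₗ
        (Submodule.orthogonalProjection (Submodule.span ℝ {x})ᗮ).toLinearMap) '' K := rfl
  rw [this]
  exact hKconv.linear_image _

lemma zero_mem_shadow (h0 : (0 : E d) ∈ K) : (0 : E d) ∈ shadow K x :=
  ⟨0, h0, by simp [projHyp]⟩

/-- Facts about the chord-parameter set. -/
lemma Sset_one_mem (hKc : IsCompact K) (h0 : (0 : E d) ∈ K) (hx : x ∉ K)
    {z : E d} (hz : z ∈ shadow K x) : (1:ℝ) ∈ Sset K x z := by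
  refine ⟨⟨zero_le_one, le_rfl⟩, ?_⟩
  simpa [chord] using piK_mem hKc h0 hx hz

lemma Sset_isClosed (hKc : IsCompact K) (z : E d) : IsClosed (Sset K x z) := by
  have hc : Continuous fun l : ℝ => chord K x z l :=
    continuous_const.add (continuous_id.smul continuous_const)
  exact IsClosed.inter isClosed_Icc (hKc.isClosed.preimage hc)

lemma Sset_bddBelow (z : E d) : BddBelow (Sset K x z) :=
  ⟨0, fun l hl => hl.1.1⟩

lemma lam0_mem (hKc : IsCompact K) (h0 : (0 : E d) ∈ K) (hx : x ∉ K)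
    {z : E d} (hz : z ∈ shadow K x) : lam0 K x z ∈ Sset K x z :=
  (Sset_isClosed hKc z).csInf_mem ⟨1, Sset_one_mem hKc h0 hx hz⟩ (Sset_bddBelow z)

lemma lam0_pos (hKc : IsCompact K) (h0 : (0 : E d) ∈ K) (hx : x ∉ K)
    {z : E d} (hz : z ∈ shadow K x) : 0 < lam0 K x z := by
  rcases (lam0_mem hKc h0 hx hz).1.1.lt_or_eq with h | h
  · exact h
  · exfalso
    have := (lam0_mem hKc h0 hx hz).2
    rw [← h] at this
    simp [chord] at this
    exact hx this

lemma lam0_le_one (hKc : IsCompact K) (h0 : (0 : E d) ∈ K) (hx : x ∉ K)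
    {z : E d} (hz : z ∈ shadow K x) : lam0 K x z ≤ 1 :=
  csInf_le (Sset_bddBelow z) (Sset_one_mem hKc h0 hx hz)

/-- The main formula: `Ψ` equals `1 - λ₀` on the shadow. -/
lemma psi_eq (hKc : IsCompact K) (hKconv : Convex ℝ K) (h0 : (0 : E d) ∈ K) (hx : x ∉ K)
    {z : E d} (hz : z ∈ shadow K x) : PsiPt K x z = 1 - lam0 K x z := by
  have hvK : piK K x z ∈ K := piK_mem hKc h0 hx hz
  have hvx : piK K x z ≠ x := fun h => hx (h ▸ hvK)
  have hnorm : (0:ℝ) < ‖piK K x z - x‖ := by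
    rw [norm_pos_iff, sub_ne_zero]; exact hvx
  have hmem := lam0_mem hKc h0 hx hz
  have h01 : 0 ≤ lam0 K x z := hmem.1.1
  have hle1 : lam0 K x z ≤ 1 := lam0_le_one hKc h0 hx hz
  have hchord : ∀ l : ℝ, chord K x z l = AffineMap.lineMap x (piK K x z) l := by
    intro l
    rw [chord, AffineMap.lineMap_apply, vsub_eq_sub, vadd_eq_add]
    abel
  -- The parameter set is an interval
  have hSsub : Sset K x z ⊆ Icc 0 1 := fun l hl => hl.1
  have hScomp : IsCompact (Sset K x z) :=
    isCompact_Icc.of_isClosed_subset (Sset_isClosed hKc z) hSsub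
  have hSconv : Convex ℝ (Sset K x z) := by
    have : Sset K x z = Icc 0 1 ∩ (AffineMap.lineMap x (piK K x z)) ⁻¹' K := by
      ext l; simp only [Sset, mem_inter_iff, mem_preimage, mem_setOf_eq, hchord]
    rw [this]
    exact (convex_Icc 0 1).inter (hKconv.affine_preimage _)
  have hSconn : IsConnected (Sset K x z) :=
    ⟨⟨1, Sset_one_mem hKc h0 hx hz⟩, hSconv.isPreconnected⟩
  have hsSup : sSup (Sset K x z) = 1 := by
    refine le_antisymm (csSup_le ⟨1, Sset_one_mem hKc h0 hx hz⟩ fun b hb => hb.1.2) ?_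
    exact le_csSup hScomp.bddAbove (Sset_one_mem hKc h0 hx hz)
  have hSIcc : Sset K x z = Icc (lam0 K x z) 1 := by
    have := eq_Icc_of_connected_compact hSconn hScomp
    rwa [hsSup] at this
  -- Compute the intersection K ∩ segment as a segment
  have hinter : K ∩ segment ℝ x (piK K x z) =
      segment ℝ (AffineMap.lineMap x (piK K x z) (lam0 K x z)) (piK K x z) := by
    have h1 : segment ℝ x (piK K x z) = (fun l : ℝ => chord K x z l) '' Icc 0 1 := by
      rw [segment_eq_image']; rfl
    have h2 : K ∩ segment ℝ x (piK K x z) = (fun l : ℝ => chord K x z l) '' Sset K x z := by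
      rw [h1]
      have : Sset K x z = Icc (0:ℝ) 1 ∩ (fun l : ℝ => chord K x z l) ⁻¹' K := rfl
      rw [this, Set.image_inter_preimage, Set.inter_comm]
    rw [h2, hSIcc, ← segment_eq_Icc hle1]
    have h3 : (fun l : ℝ => chord K x z l) '' segment ℝ (lam0 K x z) 1 =
        (AffineMap.lineMap x (piK K x z)) '' segment ℝ (lam0 K x z) 1 := by
      apply Set.image_congr
      intro l _; exact hchord l
    rw [h3, image_segment, AffineMap.lineMap_apply_one]
  -- distances
  have hd1 : dist (AffineMap.lineMap x (piK K x z) (lam0 K x z)) (piK K x z) =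
      (1 - lam0 K x z) * ‖piK K x z - x‖ := by
    rw [dist_eq_norm]
    have : AffineMap.lineMap x (piK K x z) (lam0 K x z) - piK K x z
        = (lam0 K x z - 1) • (piK K x z - x) := by
      rw [AffineMap.lineMap_apply, vsub_eq_sub, vadd_eq_add]
      module
    rw [this, norm_smul, Real.norm_eq_abs, abs_of_nonpos (by linarith)]
    ring
  have hd2 : dist x (piK K x z) = ‖piK K x z - x‖ := by
    rw [dist_eq_norm, ← norm_neg]; congr 1; abel
  rw [PsiPt, hinter, hausdorffMeasure_segment, hausdorffMeasure_segment,
    edist_dist, edist_dist, hd1, hd2,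
    ← ENNReal.ofReal_div_of_pos hnorm, mul_div_assoc,
    div_self (ne_of_gt hnorm), mul_one, ENNReal.toReal_ofReal (by linarith)]

/-- Convexity of `λ₀`. -/
lemma lam0_convex (hKc : IsCompact K) (hKconv : Convex ℝ K) (h0 : (0 : E d) ∈ K) (hx : x ∉ K)
    {z₁ z₂ : E d} (hz₁ : z₁ ∈ shadow K x) (hz₂ : z₂ ∈ shadow K x)
    {s t : ℝ} (hs : 0 ≤ s) (ht : 0 ≤ t) (hst : s + t = 1) :
    lam0 K x (s • z₁ + t • z₂) ≤ s * lam0 K x z₁ + t * lam0 K x z₂ := by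
  -- degenerate cases
  rcases hs.lt_or_eq with hs0 | hs0
  swap
  · have ht1 : t = 1 := by linarith
    subst ht1; rw [← hs0]; simp
  rcases ht.lt_or_eq with ht0 | ht0
  swap
  · have hs1 : s = 1 := by linarith
    subst hs1; rw [← ht0]; simp
  -- notation
  have hzs : s • z₁ + t • z₂ ∈ shadow K x := shadow_convex hKconv hz₁ hz₂ hs ht hst
  set l1 := lam0 K x z₁ with hl1
  set l2 := lam0 K x z₂ with hl2
  have m1 := lam0_mem hKc h0 hx hz₁
  have m2 := lam0_mem hKc h0 hx hz₂
  have l1pos : 0 < l1 := lam0_pos hKc h0 hx hz₁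
  have l2pos : 0 < l2 := lam0_pos hKc h0 hx hz₂
  have l1le : l1 ≤ 1 := lam0_le_one hKc h0 hx hz₁
  have l2le : l2 ≤ 1 := lam0_le_one hKc h0 hx hz₂
  set a1 := aF K x z₁ with ha1
  set a2 := aF K x z₂ with ha2
  set az := aF K x (s • z₁ + t • z₂) with haz
  set D := s * l2 + t * l1 with hD
  have hDpos : 0 < D := by
    have h1 : 0 < s * l2 := mul_pos hs0 l2pos
    nlinarith [mul_nonneg ht l1pos.le]
  set μ := s * l2 / D with hμdef
  set l := l1 * l2 / D with hldef
  have hlpos : 0 < l := div_pos (mul_pos l1pos l2pos) hDpos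
  have hlle1 : l ≤ 1 := by
    rw [hldef, div_le_one hDpos]
    nlinarith [mul_nonneg (mul_nonneg hs l2pos.le) (sub_nonneg.mpr l1le),
      mul_nonneg (mul_nonneg ht l1pos.le) (sub_nonneg.mpr l2le),
      mul_pos l1pos l2pos]
  have hμ0 : 0 ≤ μ := by positivity
  have hμ1 : μ ≤ 1 := by
    rw [hμdef, div_le_one hDpos]
    nlinarith [mul_nonneg ht l1pos.le]
  have hμl1 : μ * l1 = s * l := by rw [hμdef, hldef]; field_simp
  have hμl2 : (1 - μ) * l2 = t * l := by
    rw [hμdef, hldef]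
    field_simp
    ring
  -- the point q of K above the chord
  have hchord1 : ∀ (z' : E d) (c : ℝ),
      chord K x z' c = c • z' + (1 - c * (1 - aF K x z')) • x := by
    intro z' c
    rw [chord, piK_eq]
    module
  have hqK : μ • chord K x z₁ l1 + (1 - μ) • chord K x z₂ l2 ∈ K :=
    hKconv m1.2 m2.2 hμ0 (by linarith) (by ring)
  have hqeq : μ • chord K x z₁ l1 + (1 - μ) • chord K x z₂ l2
      = l • (s • z₁ + t • z₂) + (1 - l + l * (s * a1 + t * a2)) • x := by
    rw [hchord1, hchord1, ← ha1, ← ha2]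
    match_scalars
    · linear_combination hμl1
    · linear_combination (a1 - 1) * hμl1 + (a2 - 1) * hμl2 - l * hst
    · linear_combination hμl2
  -- bounds on aF values
  have hazle : az ≤ s * a1 + t * a2 := by
    apply aF_le hKc h0 hx
    have hmem : s • piK K x z₁ + t • piK K x z₂ ∈ K :=
      hKconv (piK_mem hKc h0 hx hz₁) (piK_mem hKc h0 hx hz₂) hs ht hst
    have : (s • z₁ + t • z₂) + (s * a1 + t * a2) • x
        = s • piK K x z₁ + t • piK K x z₂ := by
      rw [piK_eq, piK_eq, ← ha1, ← ha2]
      module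
    rw [this]
    exact hmem
  have ha0 : aF K x 0 ≤ 0 := aF_le hKc h0 hx (by simpa using h0)
  have hlz : l • (s • z₁ + t • z₂) ∈ shadow K x := by
    have h0s : (0 : E d) ∈ shadow K x := zero_mem_shadow h0
    have := (shadow_convex hKconv (x := x)) hzs h0s hlpos.le (by linarith : (0:ℝ) ≤ 1 - l)
      (by ring)
    simpa using this
  set aw := aF K x (l • (s • z₁ + t • z₂)) with haw
  have hawle : aw ≤ l * az := by
    have h1 : aw ≤ l * az + (1 - l) * aF K x 0 := by
      apply aF_le hKc h0 hx
      have hmem : l • piK K x (s • z₁ + t • z₂) + (1 - l) • piK K x 0 ∈ K :=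
        hKconv (piK_mem hKc h0 hx hzs) (piK_mem hKc h0 hx (zero_mem_shadow h0))
          hlpos.le (by linarith) (by ring)
      have : l • (s • z₁ + t • z₂) + (l * az + (1 - l) * aF K x 0) • x
          = l • piK K x (s • z₁ + t • z₂) + (1 - l) • piK K x 0 := by
        rw [piK_eq, piK_eq, ← haz]
        module
      rw [this]
      exact hmem
    have h2 : (1 - l) * aF K x 0 ≤ 0 :=
      mul_nonpos_of_nonneg_of_nonpos (by linarith) ha0
    linarith
  -- the chord point at parameter l is in K
  have hβwP : aw ≤ 1 - l + l * az := by nlinarith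
  have hβPq : 1 - l + l * az ≤ 1 - l + l * (s * a1 + t * a2) := by
    have := mul_le_mul_of_nonneg_left hazle hlpos.le
    linarith
  have hsegmem : (1 - l + l * az) ∈ segment ℝ aw (1 - l + l * (s * a1 + t * a2)) := by
    rw [segment_eq_Icc (le_trans hβwP hβPq)]
    exact ⟨hβwP, hβPq⟩
  obtain ⟨u, v, hu, hv, huv, hc⟩ := hsegmem
  have hPK : chord K x (s • z₁ + t • z₂) l ∈ K := by
    have hwK : piK K x (l • (s • z₁ + t • z₂)) ∈ K := piK_mem hKc h0 hx hlz
    have hqK' : l • (s • z₁ + t • z₂) + (1 - l + l * (s * a1 + t * a2)) • x ∈ K := by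
      rw [← hqeq]; exact hqK
    have hP : chord K x (s • z₁ + t • z₂) l
        = u • piK K x (l • (s • z₁ + t • z₂))
          + v • (l • (s • z₁ + t • z₂) + (1 - l + l * (s * a1 + t * a2)) • x) := by
      rw [smul_eq_mul, smul_eq_mul] at hc
      rw [hchord1, piK_eq, ← haw, ← haz]
      match_scalars <;>
        first
          | linear_combination (-(l * s)) * huv
          | linear_combination -hc
          | linear_combination (-(l * t)) * huv
          | linear_combination (l * s) * huv
          | linear_combination hc
          | linear_combination (l * t) * huv
    rw [hP]
    exact hKconv hwK hqK' hu hv huv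
  -- conclude
  have hlS : l ∈ Sset K x (s • z₁ + t • z₂) := ⟨⟨hlpos.le, hlle1⟩, hPK⟩
  have h1 : lam0 K x (s • z₁ + t • z₂) ≤ l := csInf_le (Sset_bddBelow _) hlS
  have hid : (s * l1 + t * l2) * (s * l2 + t * l1) = l1 * l2 + s * t * (l1 - l2) ^ 2 := by
    linear_combination (l1 * l2 * (s + t + 1)) * hst
  have h2 : l ≤ s * l1 + t * l2 := by
    rw [hldef, div_le_iff₀ hDpos, hD]
    have hsq : 0 ≤ s * t * (l1 - l2) ^ 2 :=
      mul_nonneg (mul_nonneg hs ht) (sq_nonneg (l1 - l2))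
    linarith [hid]
  linarith

end Facts

end PsiAux

theorem psiPt_concave {d : ℕ} (K : Set (EuclideanSpace ℝ (Fin d)))
    (hKc : IsCompact K) (hKconv : Convex ℝ K) (hKint : (interior K).Nonempty)
    (h0 : (0 : EuclideanSpace ℝ (Fin d)) ∈ K)
    (x : EuclideanSpace ℝ (Fin d)) (hx : x ∉ K) :
    ConcaveOn ℝ (shadow K x) (PsiPt K x) := by
  refine ⟨PsiAux.shadow_convex hKconv, ?_⟩
  intro z₁ hz₁ z₂ hz₂ s t hs ht hst
  have hzmem : s • z₁ + t • z₂ ∈ shadow K x :=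
    PsiAux.shadow_convex hKconv hz₁ hz₂ hs ht hst
  rw [PsiAux.psi_eq hKc hKconv h0 hx hz₁, PsiAux.psi_eq hKc hKconv h0 hx hz₂,
    PsiAux.psi_eq hKc hKconv h0 hx hzmem]
  have := PsiAux.lam0_convex hKc hKconv h0 hx hz₁ hz₂ hs ht hst
  simp only [smul_eq_mul]
  nlinarith
end

section
/- Let $T : \mathbb{R}^d \to \mathbb{R}^d$ be a linear bijection, $K \subset \mathbb{R}^d$ a convex body with $0 \in K$, and $x \notin K$. Then the average depth/distance ratio satisfies $\Psi_K(x) = \Psi_{TK}(Tx)$, where $\Psi_K(x) = \frac{1}{\mathrm{vol}_{d-1}(P_x(K))} \int_{P_x(K)} \Psi_K(x,z)\, d\mathrm{vol}_{d-1}(z)$. -/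
open MeasureTheory Set
open scoped NNReal ENNReal

/-- The average depth/distance ratio `Ψ_K(x)` with respect to the uniform
probability measure on the shadow `P_x(K)`. -/
noncomputable def PsiAvg {d : ℕ} (K : Set (EuclideanSpace ℝ (Fin d)))
    (x : EuclideanSpace ℝ (Fin d)) : ℝ :=
  (∫ z in shadow K x, PsiPt K x z ∂(μH[(d : ℝ) - 1])) / (μH[(d : ℝ) - 1] (shadow K x)).toReal

/-- The maximum depth/distance ratio `Ψ^∞_K(x)`. -/
noncomputable def PsiSup {d : ℕ} (K : Set (EuclideanSpace ℝ (Fin d)))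
    (x : EuclideanSpace ℝ (Fin d)) : ℝ :=
  sSup (PsiPt K x '' shadow K x)

lemma projHyp_add {d : ℕ} (x y z : EuclideanSpace ℝ (Fin d)) :
    projHyp x (y + z) = projHyp x y + projHyp x z := by
  simp [projHyp]

lemma projHyp_eq_zero {d : ℕ} {x y : EuclideanSpace ℝ (Fin d)}
    (hy : y ∈ Submodule.span ℝ {x}) : projHyp x y = 0 := by
  have : Submodule.orthogonalProjection (Submodule.span ℝ {x})ᗮ y = 0 :=
    Submodule.orthogonalProjectionOnto_apply_of_mem_orthogonal
      (Submodule.le_orthogonal_orthogonal _ hy)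
  simp [projHyp, this]

lemma sub_projHyp_mem {d : ℕ} (x y : EuclideanSpace ℝ (Fin d)) :
    y - projHyp x y ∈ Submodule.span ℝ {x} := by
  have := Submodule.sub_starProjection_mem_orthogonal (K := (Submodule.span ℝ {x})ᗮ) y
  rwa [Submodule.orthogonal_orthogonal] at this

lemma projHyp_mem {d : ℕ} (x y : EuclideanSpace ℝ (Fin d)) :
    projHyp x y ∈ (Submodule.span ℝ {x})ᗮ := (Submodule.orthogonalProjection _ y).2

lemma shadow_image {d : ℕ} (T : EuclideanSpace ℝ (Fin d) ≃ₗ[ℝ] EuclideanSpace ℝ (Fin d))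
    (K : Set (EuclideanSpace ℝ (Fin d))) (x : EuclideanSpace ℝ (Fin d)) :
    shadow (⇑T '' K) (T x) = (fun z => projHyp (T x) (T z)) '' shadow K x := by
  unfold shadow
  rw [Set.image_image, Set.image_image]
  apply Set.image_congr
  intro k _
  obtain ⟨c, hc⟩ := Submodule.mem_span_singleton.1 (sub_projHyp_mem x k)
  have hk : k = projHyp x k + c • x := by rw [hc]; abel
  have : T k = T (projHyp x k) + c • T x := by
    conv_lhs => rw [hk]
    rw [map_add, T.map_smul]
  rw [this, projHyp_add, projHyp_eq_zero (Submodule.smul_mem _ c (Submodule.mem_span_singleton_self _)),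
    add_zero]

lemma seg_scale {d : ℕ} (T : EuclideanSpace ℝ (Fin d) ≃ₗ[ℝ] EuclideanSpace ℝ (Fin d))
    {p q : EuclideanSpace ℝ (Fin d)} (hpq : q ≠ p) {A : Set (EuclideanSpace ℝ (Fin d))}
    (hA : A ⊆ segment ℝ p q) :
    μH[1] (⇑T '' A) = ((‖T (q - p)‖₊ / ‖q - p‖₊ : ℝ≥0) : ℝ≥0∞) * μH[1] A := by
  have hu : q - p ≠ 0 := sub_ne_zero.2 hpq
  have hTu : T (q - p) ≠ 0 := by
    intro h
    exact hu (by simpa using T.injective (by simpa using h))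
  set r : ℝ≥0 := ‖T (q - p)‖₊ / ‖q - p‖₊ with hr
  have hr0 : r ≠ 0 := by
    simp only [hr, ne_eq, div_eq_zero_iff, nnnorm_eq_zero]
    tauto
  have hdist : ∀ a ∈ A, ∀ b ∈ A, ‖T a - T b‖₊ = r * ‖a - b‖₊ := by
    intro a ha b hb
    rw [segment_eq_image' ℝ p q] at hA
    obtain ⟨s, _, rfl⟩ := hA ha
    obtain ⟨t, _, rfl⟩ := hA hb
    have h1 : (p + s • (q - p)) - (p + t • (q - p)) = (s - t) • (q - p) := by module
    have h2 : T (p + s • (q - p)) - T (p + t • (q - p)) = (s - t) • T (q - p) := by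
      rw [← map_sub, h1, T.map_smul]
    rw [h1, h2, nnnorm_smul, nnnorm_smul, hr]
    have hu' : ‖q - p‖₊ ≠ 0 := nnnorm_ne_zero_iff.2 hu
    field_simp
  have hlip : LipschitzOnWith r (⇑T) A := by
    intro a ha b hb
    rw [edist_nndist, edist_nndist, nndist_eq_nnnorm, nndist_eq_nnnorm, hdist a ha b hb, ENNReal.coe_mul]
  have hlip' : LipschitzOnWith r⁻¹ (⇑T.symm) (⇑T '' A) := by
    rintro _ ⟨a, ha, rfl⟩ _ ⟨b, hb, rfl⟩
    simp only [T.symm_apply_apply]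
    rw [edist_nndist, edist_nndist, nndist_eq_nnnorm, nndist_eq_nnnorm, hdist a ha b hb]
    rw [ENNReal.coe_mul, ← mul_assoc, ← ENNReal.coe_mul, inv_mul_cancel₀ hr0]
    simp
  have h1 := hlip.hausdorffMeasure_image_le zero_le_one
  have h2 := hlip'.hausdorffMeasure_image_le zero_le_one
  rw [show ⇑T.symm '' (⇑T '' A) = A from by rw [Set.image_image]; simp] at h2
  simp only [ENNReal.rpow_one] at h1 h2
  refine le_antisymm h1 ?_
  calc (r : ℝ≥0∞) * μH[1] A ≤ r * ((r⁻¹ : ℝ≥0) * μH[1] (⇑T '' A)) := mul_le_mul_right h2 _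
  _ = μH[1] (⇑T '' A) := by
      rw [← mul_assoc, ← ENNReal.coe_mul, mul_inv_cancel₀ hr0, ENNReal.coe_one, one_mul]

lemma psiPt_transfer {d : ℕ} (T : EuclideanSpace ℝ (Fin d) ≃ₗ[ℝ] EuclideanSpace ℝ (Fin d))
    {K : Set (EuclideanSpace ℝ (Fin d))} (hKb : Bornology.IsBounded K)
    {x : EuclideanSpace ℝ (Fin d)} (hx : x ∉ K) (hx0 : x ≠ 0)
    {z : EuclideanSpace ℝ (Fin d)} (hz : z ∈ shadow K x) :
    PsiPt (⇑T '' K) (T x) (projHyp (T x) (T z)) = PsiPt K x z := by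
  set S : Set ℝ := {t : ℝ | z + t • x ∈ K} with hSdef
  have hSne : S.Nonempty := by
    obtain ⟨k, hk, rfl⟩ := hz
    obtain ⟨c, hc⟩ := Submodule.mem_span_singleton.1 (sub_projHyp_mem x k)
    refine ⟨c, ?_⟩
    show projHyp x k + c • x ∈ K
    have h : projHyp x k + (k - projHyp x k) = k := by abel
    rw [hc, h]
    exact hk
  have hSbdd : BddBelow S := by
    obtain ⟨R, hR⟩ := hKb.subset_closedBall 0
    refine ⟨-((R + ‖z‖) / ‖x‖), ?_⟩
    intro t ht
    have h1 : ‖z + t • x‖ ≤ R := by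
      simpa [Metric.mem_closedBall, dist_zero_right] using hR ht
    have h2 : |t| * ‖x‖ ≤ R + ‖z‖ := by
      calc |t| * ‖x‖ = ‖t • x‖ := by rw [norm_smul, Real.norm_eq_abs]
      _ = ‖(z + t • x) - z‖ := by congr 1; abel
      _ ≤ ‖z + t • x‖ + ‖z‖ := norm_sub_le _ _
      _ ≤ R + ‖z‖ := by linarith
    have hxpos : 0 < ‖x‖ := norm_pos_iff.2 hx0
    have h3 : |t| ≤ (R + ‖z‖) / ‖x‖ := (le_div_iff₀ hxpos).2 h2
    have := neg_abs_le t
    linarith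
  obtain ⟨c, hc⟩ := Submodule.mem_span_singleton.1 (sub_projHyp_mem (T x) (T z))
  have hproj : projHyp (T x) (T z) = T z - c • T x := by rw [hc]; abel
  have hset : {t : ℝ | projHyp (T x) (T z) + t • T x ∈ ⇑T '' K} = (fun s => s + c) '' S := by
    ext t
    have h1 : projHyp (T x) (T z) + t • T x = T (z + (t - c) • x) := by
      rw [hproj, map_add, T.map_smul]
      module
    simp only [Set.mem_setOf_eq, h1, Set.mem_image]
    constructor
    · rintro ⟨k, hk, hk2⟩
      have hke : k = z + (t - c) • x := T.injective hk2
      refine ⟨t - c, ?_, by ring⟩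
      rw [hSdef]
      show z + (t - c) • x ∈ K
      rw [← hke]
      exact hk
    · rintro ⟨s, hs, rfl⟩
      exact ⟨z + (s + c - c) • x, by simpa [hSdef] using hs, rfl⟩
  have hsInf : sInf {t : ℝ | projHyp (T x) (T z) + t • T x ∈ ⇑T '' K} = sInf S + c := by
    rw [hset]
    have h := (OrderIso.addRight c).map_csInf' hSne hSbdd
    simp only [OrderIso.addRight_apply] at h
    rw [← h]
  have hpiK : piK (⇑T '' K) (T x) (projHyp (T x) (T z)) = T (piK K x z) := by
    unfold piK
    rw [hsInf, hproj, map_add, T.map_smul]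
    module
  by_cases hπ : piK K x z = x
  · unfold PsiPt
    rw [hpiK, hπ]
    have hx' : T x ∉ ⇑T '' K := by
      rintro ⟨k, hk, he⟩
      exact hx (T.injective he ▸ hk)
    rw [segment_same, segment_same, Set.inter_singleton_eq_empty.2 hx',
      Set.inter_singleton_eq_empty.2 hx]
    simp
  · unfold PsiPt
    rw [hpiK]
    have hseg : segment ℝ (T x) (T (piK K x z)) = ⇑T '' segment ℝ x (piK K x z) := by
      have h := image_segment ℝ (T.toLinearMap.toAffineMap) x (piK K x z)
      simp only [LinearMap.coe_toAffineMap, LinearEquiv.coe_coe] at h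
      exact h.symm
    have hu : piK K x z - x ≠ 0 := sub_ne_zero.2 hπ
    have hTu : T (piK K x z - x) ≠ 0 := by
      intro h
      exact hu (by simpa using T.injective (by simpa using h))
    have hr0 : (‖T (piK K x z - x)‖₊ / ‖piK K x z - x‖₊ : ℝ≥0) ≠ 0 :=
      div_ne_zero (nnnorm_ne_zero_iff.2 hTu) (nnnorm_ne_zero_iff.2 hu)
    rw [hseg, ← Set.image_inter T.injective,
      seg_scale T hπ Set.inter_subset_right, seg_scale T hπ (subset_refl _),
      ENNReal.mul_div_mul_left _ _ (ENNReal.coe_ne_zero.2 hr0) ENNReal.coe_ne_top]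

theorem psi_invariant {d : ℕ} (T : EuclideanSpace ℝ (Fin d) ≃ₗ[ℝ] EuclideanSpace ℝ (Fin d))
    (K : Set (EuclideanSpace ℝ (Fin d)))
    (hKc : IsCompact K) (hKconv : Convex ℝ K) (hKint : (interior K).Nonempty)
    (h0 : (0 : EuclideanSpace ℝ (Fin d)) ∈ K)
    (x : EuclideanSpace ℝ (Fin d)) (hx : x ∉ K) :
    PsiAvg K x = PsiAvg (T '' K) (T x) := by
  classical
  have hx0 : x ≠ 0 := fun h => hx (h ▸ h0)
  have hd : 0 < d := by
    rcases Nat.eq_zero_or_pos d with h | h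
    · subst h
      exact absurd (Subsingleton.elim x 0) hx0
    · exact h
  set m := d - 1 with hm
  have hcast : ((m : ℕ) : ℝ) = (d : ℝ) - 1 := by
    have h : (m : ℕ) + 1 = d := by omega
    have := congrArg (fun n : ℕ => (n : ℝ)) h
    push_cast at this
    linarith
  have hexp0 : (0 : ℝ) ≤ (d : ℝ) - 1 := by rw [← hcast]; positivity
  have hTcont : Continuous T := T.toLinearMap.continuous_of_finiteDimensional
  have hTx0 : T x ≠ 0 := fun h => hx0 (by simpa using T.injective (by simpa using h))
  set V := (Submodule.span ℝ {x})ᗮ with hVdef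
  set W := (Submodule.span ℝ {T x})ᗮ with hWdef
  have hfr : Module.finrank ℝ (EuclideanSpace ℝ (Fin d)) = d := finrank_euclideanSpace_fin
  have hVrank : Module.finrank ℝ V = m := by
    have h1 := Submodule.finrank_add_finrank_orthogonal (K := Submodule.span ℝ {x})
    rw [finrank_span_singleton hx0, hfr, ← hVdef] at h1
    omega
  have hWrank : Module.finrank ℝ W = m := by
    have h1 := Submodule.finrank_add_finrank_orthogonal (K := Submodule.span ℝ {T x})
    rw [finrank_span_singleton hTx0, hfr, ← hWdef] at h1
    omega
  set B₁ : OrthonormalBasis (Fin m) ℝ V :=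
    (stdOrthonormalBasis ℝ V).reindex (finCongr hVrank) with hB₁
  set B₂ : OrthonormalBasis (Fin m) ℝ W :=
    (stdOrthonormalBasis ℝ W).reindex (finCongr hWrank) with hB₂
  set ι₁ : EuclideanSpace ℝ (Fin m) → EuclideanSpace ℝ (Fin d) :=
    fun a => (B₁.repr.symm a : EuclideanSpace ℝ (Fin d)) with hι₁def
  set ι₂ : EuclideanSpace ℝ (Fin m) → EuclideanSpace ℝ (Fin d) :=
    fun a => (B₂.repr.symm a : EuclideanSpace ℝ (Fin d)) with hι₂def
  have hι₁iso : Isometry ι₁ := V.subtypeₗᵢ.isometry.comp B₁.repr.symm.isometry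
  have hι₂iso : Isometry ι₂ := W.subtypeₗᵢ.isometry.comp B₂.repr.symm.isometry
  have hι₁inj : Function.Injective ι₁ := hι₁iso.injective
  have hι₂inj : Function.Injective ι₂ := hι₂iso.injective
  have hrange₁ : range ι₁ = (V : Set (EuclideanSpace ℝ (Fin d))) := by
    ext y
    constructor
    · rintro ⟨a, rfl⟩
      exact (B₁.repr.symm a).2
    · intro hy
      exact ⟨B₁.repr ⟨y, hy⟩, by simp [hι₁def]⟩
  have hrange₂ : range ι₂ = (W : Set (EuclideanSpace ℝ (Fin d))) := by
    ext y
    constructor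
    · rintro ⟨a, rfl⟩
      exact (B₂.repr.symm a).2
    · intro hy
      exact ⟨B₂.repr ⟨y, hy⟩, by simp [hι₂def]⟩
  have hemb₁ : MeasurableEmbedding ι₁ := hι₁iso.isClosedEmbedding.measurableEmbedding
  have hemb₂ : MeasurableEmbedding ι₂ := hι₂iso.isClosedEmbedding.measurableEmbedding
  set L : EuclideanSpace ℝ (Fin d) → EuclideanSpace ℝ (Fin d) :=
    fun z => projHyp (T x) (T z) with hLdef
  set Lmap : EuclideanSpace ℝ (Fin d) →ₗ[ℝ] W :=
    (Submodule.orthogonalProjection W).toLinearMap ∘ₗ (T : EuclideanSpace ℝ (Fin d) →ₗ[ℝ] EuclideanSpace ℝ (Fin d)) with hLmapdef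
  have hLmap_apply : ∀ y, ((Lmap y : W) : EuclideanSpace ℝ (Fin d)) = L y := fun y => rfl
  set M : EuclideanSpace ℝ (Fin m) →ₗ[ℝ] EuclideanSpace ℝ (Fin m) :=
    B₂.repr.toLinearEquiv.toLinearMap ∘ₗ Lmap ∘ₗ
      (V.subtype ∘ₗ B₁.repr.symm.toLinearEquiv.toLinearMap) with hMdef
  have hιM : ∀ a, ι₂ (M a) = L (ι₁ a) := by
    intro a
    show ((B₂.repr.symm (B₂.repr (Lmap (ι₁ a))) : W) : EuclideanSpace ℝ (Fin d)) = L (ι₁ a)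
    rw [LinearIsometryEquiv.symm_apply_apply]
    exact hLmap_apply _
  have hMinj : Function.Injective M := by
    rw [← LinearMap.ker_eq_bot, Submodule.eq_bot_iff]
    intro a ha
    rw [LinearMap.mem_ker] at ha
    have h1 : L (ι₁ a) = 0 := by
      rw [← hιM, ha]
      simp [hι₂def]
    have h2 : T (ι₁ a) ∈ Submodule.span ℝ {T x} := by
      have h3 : T (ι₁ a) - L (ι₁ a) ∈ Submodule.span ℝ {T x} := sub_projHyp_mem (T x) (T (ι₁ a))
      rwa [h1, sub_zero] at h3
    obtain ⟨cc, hcc⟩ := Submodule.mem_span_singleton.1 h2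
    have h4 : ι₁ a = cc • x := T.injective (by rw [T.map_smul, hcc])
    have h5 : ι₁ a ∈ V := by
      have : ι₁ a ∈ range ι₁ := mem_range_self a
      rwa [hrange₁] at this
    have h6 : ι₁ a ∈ Submodule.span ℝ {x} := by
      rw [h4]
      exact Submodule.smul_mem _ cc (Submodule.mem_span_singleton_self x)
    have h7 : ι₁ a = 0 := by
      have hb := (Submodule.span ℝ {x}).inf_orthogonal_eq_bot
      have hmem : ι₁ a ∈ Submodule.span ℝ {x} ⊓ (Submodule.span ℝ {x})ᗮ :=
        Submodule.mem_inf.2 ⟨h6, h5⟩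
      rw [hb] at hmem
      exact (Submodule.mem_bot ℝ).1 hmem
    have h8 : ι₁ (0 : EuclideanSpace ℝ (Fin m)) = 0 := by simp [hι₁def]
    exact hι₁inj (by rw [h7, h8])
  have hdet : LinearMap.det M ≠ 0 := by
    intro h
    have hb := LinearMap.bot_lt_ker_of_det_eq_zero h
    rw [LinearMap.ker_eq_bot.2 hMinj] at hb
    exact lt_irrefl _ hb
  -- Haar instance for the Hausdorff measure on the (d-1)-dimensional model space
  haveI hνHaar : (μH[(d : ℝ) - 1] : Measure (EuclideanSpace ℝ (Fin m))).IsAddHaarMeasure := by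
    have h := isAddHaarMeasure_hausdorffMeasure (E := EuclideanSpace ℝ (Fin m))
    rw [show ((Module.finrank ℝ (EuclideanSpace ℝ (Fin m)) : ℕ) : ℝ) = (d : ℝ) - 1 by
      rw [finrank_euclideanSpace_fin]; exact hcast] at h
    exact h
  have hprojcont : Continuous (projHyp x) :=
    (Submodule.orthogonalProjection V).continuous.subtype_val
  have hprojcont' : Continuous (projHyp (T x)) :=
    (Submodule.orthogonalProjection W).continuous.subtype_val
  have hScpt : IsCompact (shadow K x) := hKc.image hprojcont
  have hSmeas : MeasurableSet (shadow K x) := hScpt.isClosed.measurableSet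
  have hS'cpt : IsCompact (shadow (⇑T '' K) (T x)) := (hKc.image hTcont).image hprojcont'
  have hS'meas : MeasurableSet (shadow (⇑T '' K) (T x)) := hS'cpt.isClosed.measurableSet
  have hSsubV : shadow K x ⊆ (V : Set (EuclideanSpace ℝ (Fin d))) := by
    rintro _ ⟨k, _, rfl⟩
    exact projHyp_mem x k
  set S₀ : Set (EuclideanSpace ℝ (Fin m)) := ι₁ ⁻¹' (shadow K x) with hS₀def
  have hS₀meas : MeasurableSet S₀ := hSmeas.preimage hι₁iso.continuous.measurable
  have hS₀img : ι₁ '' S₀ = shadow K x := by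
    rw [hS₀def, Set.image_preimage_eq_of_subset]
    rw [hrange₁]
    exact hSsubV
  have hmap₁ : Measure.map ι₁ (μH[(d : ℝ) - 1]) = (μH[(d : ℝ) - 1]).restrict (range ι₁) :=
    hι₁iso.map_hausdorffMeasure (Or.inl hexp0)
  have hmap₂ : Measure.map ι₂ (μH[(d : ℝ) - 1]) = (μH[(d : ℝ) - 1]).restrict (range ι₂) :=
    hι₂iso.map_hausdorffMeasure (Or.inl hexp0)
  have hLHSnum : ∫ z in shadow K x, PsiPt K x z ∂(μH[(d : ℝ) - 1])
      = ∫ a in S₀, PsiPt K x (ι₁ a) ∂(μH[(d : ℝ) - 1]) := by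
    have h1 : (μH[(d : ℝ) - 1] : Measure (EuclideanSpace ℝ (Fin d))).restrict (shadow K x)
        = (Measure.map ι₁ (μH[(d : ℝ) - 1])).restrict (shadow K x) := by
      rw [hmap₁, Measure.restrict_restrict hSmeas,
        Set.inter_eq_self_of_subset_left (by rw [hrange₁]; exact hSsubV)]
    calc ∫ z in shadow K x, PsiPt K x z ∂(μH[(d : ℝ) - 1])
        = ∫ z in shadow K x, PsiPt K x z ∂(Measure.map ι₁ (μH[(d : ℝ) - 1])) := by rw [← h1]
      _ = ∫ a in S₀, PsiPt K x (ι₁ a) ∂(μH[(d : ℝ) - 1]) := hemb₁.setIntegral_map _ _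
  have hLHSden : (μH[(d : ℝ) - 1] : Measure (EuclideanSpace ℝ (Fin d))) (shadow K x)
      = (μH[(d : ℝ) - 1] : Measure (EuclideanSpace ℝ (Fin m))) S₀ := by
    rw [← hS₀img, hι₁iso.hausdorffMeasure_image (Or.inl hexp0)]
  have hshadow' : shadow (⇑T '' K) (T x) = ι₂ '' (⇑M '' S₀) := by
    rw [shadow_image T K x, ← hS₀img, Set.image_image, Set.image_image]
    exact Set.image_congr fun a _ => (hιM a).symm
  have hRHSnum : ∫ w in shadow (⇑T '' K) (T x), PsiPt (⇑T '' K) (T x) w ∂(μH[(d : ℝ) - 1])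
      = ∫ b in ⇑M '' S₀, PsiPt (⇑T '' K) (T x) (ι₂ b) ∂(μH[(d : ℝ) - 1]) := by
    have h1 : (μH[(d : ℝ) - 1] : Measure (EuclideanSpace ℝ (Fin d))).restrict (shadow (⇑T '' K) (T x))
        = (Measure.map ι₂ (μH[(d : ℝ) - 1])).restrict (shadow (⇑T '' K) (T x)) := by
      rw [hmap₂, Measure.restrict_restrict hS'meas,
        Set.inter_eq_self_of_subset_left (by rw [hshadow']; exact (Set.image_subset_range _ _))]
    have h2 : ι₂ ⁻¹' (shadow (⇑T '' K) (T x)) = ⇑M '' S₀ := by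
      rw [hshadow', Set.preimage_image_eq _ hι₂inj]
    calc ∫ w in shadow (⇑T '' K) (T x), PsiPt (⇑T '' K) (T x) w ∂(μH[(d : ℝ) - 1])
        = ∫ w in shadow (⇑T '' K) (T x), PsiPt (⇑T '' K) (T x) w
            ∂(Measure.map ι₂ (μH[(d : ℝ) - 1])) := by rw [← h1]
      _ = ∫ b in ι₂ ⁻¹' (shadow (⇑T '' K) (T x)), PsiPt (⇑T '' K) (T x) (ι₂ b)
            ∂(μH[(d : ℝ) - 1]) := hemb₂.setIntegral_map _ _
      _ = ∫ b in ⇑M '' S₀, PsiPt (⇑T '' K) (T x) (ι₂ b) ∂(μH[(d : ℝ) - 1]) := by rw [h2]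
  have hCoV : ∫ b in ⇑M '' S₀, PsiPt (⇑T '' K) (T x) (ι₂ b) ∂(μH[(d : ℝ) - 1])
      = ∫ b in S₀, |LinearMap.det M| • PsiPt (⇑T '' K) (T x) (ι₂ (M b)) ∂(μH[(d : ℝ) - 1]) := by
    have h := integral_image_eq_integral_abs_det_fderiv_smul (μH[(d : ℝ) - 1]) hS₀meas
      (fun b _ => (LinearMap.toContinuousLinearMap M).hasFDerivAt.hasFDerivWithinAt)
      hMinj.injOn (fun w => PsiPt (⇑T '' K) (T x) (ι₂ w))
    simpa using h
  have hptw : ∀ b ∈ S₀, PsiPt (⇑T '' K) (T x) (ι₂ (M b)) = PsiPt K x (ι₁ b) := by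
    intro b hb
    rw [hιM b]
    exact psiPt_transfer T hKc.isBounded hx hx0 hb
  have hRHSnum2 : ∫ b in S₀, |LinearMap.det M| • PsiPt (⇑T '' K) (T x) (ι₂ (M b)) ∂(μH[(d : ℝ) - 1])
      = |LinearMap.det M| * ∫ a in S₀, PsiPt K x (ι₁ a) ∂(μH[(d : ℝ) - 1]) := by
    rw [setIntegral_congr_fun hS₀meas (fun b hb => by rw [hptw b hb])]
    rw [integral_smul]
    simp [smul_eq_mul]
  have hRHSden : (μH[(d : ℝ) - 1] : Measure (EuclideanSpace ℝ (Fin d))) (shadow (⇑T '' K) (T x))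
      = ENNReal.ofReal |LinearMap.det M| *
        (μH[(d : ℝ) - 1] : Measure (EuclideanSpace ℝ (Fin m))) S₀ := by
    rw [hshadow', hι₂iso.hausdorffMeasure_image (Or.inl hexp0),
      Measure.addHaar_image_linearMap]
  unfold PsiAvg
  rw [hLHSnum, hRHSnum, hCoV, hRHSnum2, hLHSden, hRHSden, ENNReal.toReal_mul,
    ENNReal.toReal_ofReal (abs_nonneg _),
    mul_div_mul_left _ _ (abs_ne_zero.2 hdet)]
end

section
/- Matrix determinant step: Let $\lambda : U \to (0, \infty)$ be convex and differentiable at $z \in U \subset \mathbb{R}^{d-1}$, with $0 \in U$, $\lambda(z) \ge 1 - 1/(2d)$ and $\lambda(0) \le 1$. Define $\Lambda(z) = \lambda(z) z$. Then $\det(D\Lambda(z)) = \lambda(z)^{d-1}\left(1 + \frac{\langle \nabla\lambda(z), z\rangle}{\lambda(z)}\right) \ge \lambda(z)^{d-1}\left(2 - \frac{\lambda(0)}{\lambda(z)}\right) \ge \frac{1}{4}$ for $d \ge 2$. -/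
open Set Topology Filter

/-- First-order condition for convexity: `f y ≥ f x + ⟪∇f x, y - x⟫`. -/
lemma convex_grad_ineq' {E : Type*} [NormedAddCommGroup E] [InnerProductSpace ℝ E]
    [CompleteSpace E]
    {U : Set E} {f : E → ℝ} (hconv : ConvexOn ℝ U f) {x y : E} (hx : x ∈ U) (hy : y ∈ U)
    {g : E} (hg : HasGradientAt f g x) :
    f x + (inner ℝ g (y - x) : ℝ) ≤ f y := by
  set φ : ℝ → E := fun t => x + t • (y - x) with hφ
  have hγ : HasDerivAt φ (y - x) 0 := by
    have := ((hasDerivAt_id (0:ℝ)).smul_const (y - x)).const_add x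
    simp only [one_smul, id] at this; exact this
  have hφ0 : φ 0 = x := by simp [hφ]
  have hF : HasFDerivAt f ((InnerProductSpace.toDual ℝ E) g) (φ 0) := by
    rw [hφ0]; exact hg.hasFDerivAt
  have hd : HasDerivAt (f ∘ φ) ((inner ℝ g (y - x) : ℝ)) 0 := by
    simpa [InnerProductSpace.toDual_apply_apply] using hF.comp_hasDerivAt 0 hγ
  have hslope : Filter.Tendsto (slope (f ∘ φ) 0) (𝓝[>] 0) (𝓝 ((inner ℝ g (y - x) : ℝ))) :=
    (hasDerivAt_iff_tendsto_slope.1 hd).mono_left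
      (nhdsWithin_mono 0 fun t ht => Set.mem_compl_singleton_iff.2 (ne_of_gt ht))
  have hbound : ∀ᶠ t in 𝓝[>] (0:ℝ), slope (f ∘ φ) 0 t ≤ f y - f x := by
    filter_upwards [Ioo_mem_nhdsGT (by norm_num : (0:ℝ) < 1),
      self_mem_nhdsWithin] with t ht ht'
    have ht0 : (0:ℝ) < t := ht'
    have hcomb : f ((1 - t) • x + t • y) ≤ (1 - t) * f x + t * f y :=
      hconv.2 hx hy (by linarith [ht.2]) (le_of_lt ht0) (by ring)
    have hφt : φ t = (1 - t) • x + t • y := by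
      simp [hφ, smul_sub, sub_smul]; abel
    have hstep : (f ∘ φ) t - (f ∘ φ) 0 ≤ t * (f y - f x) := by
      simp only [Function.comp, hφ0, hφt]
      nlinarith [hcomb]
    rw [slope_def_field, sub_zero, div_le_iff₀ ht0]
    linarith [hstep]
  have := le_of_tendsto hslope hbound
  linarith

/-- Matrix determinant lemma for `c • id + ⟨g, ·⟩ z` on Euclidean space. -/
lemma det_smul_id_add_rankOne {n : ℕ} {c : ℝ} (hc : c ≠ 0)
    (g z : EuclideanSpace ℝ (Fin n)) :
    (c • ContinuousLinearMap.id ℝ (EuclideanSpace ℝ (Fin n))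
      + (innerSL ℝ g).smulRight z).det = c ^ n * (1 + (inner ℝ g z : ℝ) / c) := by
  classical
  set T := c • ContinuousLinearMap.id ℝ (EuclideanSpace ℝ (Fin n))
      + (innerSL ℝ g).smulRight z with hTdef
  have hdet : T.det = LinearMap.det (T : EuclideanSpace ℝ (Fin n) →ₗ[ℝ] _) := rfl
  set b := (EuclideanSpace.basisFun (Fin n) ℝ).toBasis with hb
  rw [hdet, ← LinearMap.det_toMatrix b]
  have hM : LinearMap.toMatrix b b (T : EuclideanSpace ℝ (Fin n) →ₗ[ℝ] _)
      = c • (1 + Matrix.replicateCol Unit (c⁻¹ • (z : Fin n → ℝ)) * Matrix.replicateRow Unit (g : Fin n → ℝ)) := by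
    ext i j
    rw [LinearMap.toMatrix_apply]
    have hTb : (T : EuclideanSpace ℝ (Fin n) →ₗ[ℝ] _) (b j)
        = c • (b j) + (inner ℝ g (b j) : ℝ) • z := rfl
    rw [hTb]
    have hbj : (b j : EuclideanSpace ℝ (Fin n)) = EuclideanSpace.single j 1 := by
      simp [hb, EuclideanSpace.basisFun_apply]
    have hrepr : ∀ v : EuclideanSpace ℝ (Fin n), b.repr v i = v i := fun v => by
      simp [hb, OrthonormalBasis.coe_toBasis_repr_apply, EuclideanSpace.basisFun_repr]
    rw [hrepr, hbj]
    have hinnerb : (inner ℝ g (EuclideanSpace.single j (1:ℝ)) : ℝ) = g j := by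
      simp [EuclideanSpace.inner_single_right]
    rw [PiLp.add_apply, PiLp.smul_apply, PiLp.smul_apply, hinnerb]
    simp only [Matrix.smul_apply, Matrix.add_apply, Matrix.mul_apply, Matrix.one_apply,
      Matrix.replicateCol_apply, Matrix.replicateRow_apply, EuclideanSpace.single_apply, Finset.sum_const,
      Finset.card_univ, Fintype.card_unit, one_smul, smul_eq_mul, Pi.smul_apply]
    rcases eq_or_ne i j with h | h
    · subst h; simp; field_simp
    · simp [h, Ne.symm h]
      field_simp
  rw [hM, Matrix.det_smul, Matrix.det_one_add_replicateCol_mul_replicateRow]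
  have hinner : (inner ℝ g z : ℝ) = dotProduct (g : Fin n → ℝ) (z : Fin n → ℝ) := by
    simp [PiLp.inner_apply, dotProduct, RCLike.inner_apply, mul_comm]
  have hdp : dotProduct (g : Fin n → ℝ) (c⁻¹ • (z : Fin n → ℝ))
      = c⁻¹ * dotProduct (g : Fin n → ℝ) (z : Fin n → ℝ) := by
    simp only [dotProduct, Pi.smul_apply, smul_eq_mul, Finset.mul_sum]
    exact Finset.sum_congr rfl fun x _ => by ring
  rw [hdp, hinner, Fintype.card_fin, div_eq_inv_mul]

theorem jacobian_det_step {d : ℕ} (hd : 2 ≤ d)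
    (U : Set (EuclideanSpace ℝ (Fin (d - 1)))) (h0U : (0 : EuclideanSpace ℝ (Fin (d - 1))) ∈ U)
    (lam : EuclideanSpace ℝ (Fin (d - 1)) → ℝ)
    (hconv : ConvexOn ℝ U lam) (hpos : ∀ y ∈ U, 0 < lam y)
    (z : EuclideanSpace ℝ (Fin (d - 1))) (hz : z ∈ U)
    (g : EuclideanSpace ℝ (Fin (d - 1))) (hgrad : HasGradientAt lam g z)
    (hlamz : 1 - 1 / (2 * (d : ℝ)) ≤ lam z) (hlam0 : lam 0 ≤ 1) :
    -- the Jacobian of `Λ(z) = λ(z) z` is `λ(z) Id + z ∇λ(z)ᵀ`, and its determinant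
    -- satisfies the stated identity and lower bounds
    HasFDerivAt (fun y => lam y • y)
        (lam z • ContinuousLinearMap.id ℝ (EuclideanSpace ℝ (Fin (d - 1)))
          + (innerSL ℝ g).smulRight z) z
      ∧ (lam z • ContinuousLinearMap.id ℝ (EuclideanSpace ℝ (Fin (d - 1)))
          + (innerSL ℝ g).smulRight z).det
        = lam z ^ (d - 1) * (1 + (inner ℝ g z : ℝ) / lam z)
      ∧ lam z ^ (d - 1) * (1 + (inner ℝ g z : ℝ) / lam z)
        ≥ lam z ^ (d - 1) * (2 - lam 0 / lam z)
      ∧ lam z ^ (d - 1) * (2 - lam 0 / lam z) ≥ 1 / 4 := by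
  have hlz : 0 < lam z := hpos z hz
  have hl0 : 0 < lam 0 := hpos 0 h0U
  have hdual : (InnerProductSpace.toDual ℝ (EuclideanSpace ℝ (Fin (d - 1)))) g = innerSL ℝ g := by
    ext y; simp [InnerProductSpace.toDual_apply_apply]
  refine ⟨?_, ?_, ?_, ?_⟩
  · have := hgrad.hasFDerivAt.smul (hasFDerivAt_id z)
    rwa [hdual] at this
  · exact det_smul_id_add_rankOne hlz.ne' g z
  · -- convexity first-order bound
    have h1 := convex_grad_ineq' hconv hz h0U hgrad
    have hinner : (inner ℝ g ((0 : EuclideanSpace ℝ (Fin (d - 1))) - z) : ℝ)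
        = -(inner ℝ g z : ℝ) := by simp
    rw [hinner] at h1
    have key : 2 - lam 0 / lam z ≤ 1 + (inner ℝ g z : ℝ) / lam z := by
      have h2 : (lam z - lam 0) / lam z ≤ (inner ℝ g z : ℝ) / lam z :=
        (div_le_div_iff_of_pos_right hlz).2 (by linarith)
      have h3 : (lam z - lam 0) / lam z = 1 - lam 0 / lam z := by field_simp
      linarith
    exact mul_le_mul_of_nonneg_left key (by positivity)
  · -- numeric bound
    have hdR : (2:ℝ) ≤ (d:ℝ) := by exact_mod_cast hd
    have hdpos : (0:ℝ) < d := by linarith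
    have hinv : 1 / (2 * (d:ℝ)) ≤ 1/4 := by
      rw [div_le_div_iff₀ (by linarith) (by norm_num)]; linarith
    have ha : (3:ℝ)/4 ≤ lam z := by linarith
    have hpow : (1:ℝ)/2 ≤ lam z ^ (d - 2) := by
      have hx : (-2:ℝ) ≤ lam z - 1 := by linarith
      have hb := one_add_mul_le_pow hx (d - 2)
      have hc : ((d - 2 : ℕ) : ℝ) = (d:ℝ) - 2 := by
        push_cast [Nat.cast_sub hd]; ring
      rw [hc] at hb
      have hgeq : 1/2 ≤ 1 + ((d:ℝ) - 2) * (lam z - 1) := by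
        rcases le_or_gt (lam z) 1 with h | h
        · have h2 : 1 - lam z ≤ 1 / (2 * (d:ℝ)) := by linarith
          have h3 : ((d:ℝ) - 2) * (1 - lam z) ≤ ((d:ℝ) - 2) * (1 / (2 * (d:ℝ))) :=
            mul_le_mul_of_nonneg_left h2 (by linarith)
          have h4 : ((d:ℝ) - 2) * (1 / (2 * (d:ℝ))) ≤ 1/2 := by
            rw [mul_one_div, div_le_div_iff₀ (by linarith) (by norm_num)]; linarith
          have h5 : ((d:ℝ) - 2) * (lam z - 1) = -(((d:ℝ) - 2) * (1 - lam z)) := by ring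
          linarith
        · have h6 := mul_nonneg (by linarith : (0:ℝ) ≤ (d:ℝ) - 2)
            (by linarith : (0:ℝ) ≤ lam z - 1)
          linarith
      calc (1:ℝ)/2 ≤ 1 + ((d:ℝ) - 2) * (lam z - 1) := hgeq
        _ ≤ (1 + (lam z - 1)) ^ (d - 2) := hb
        _ = lam z ^ (d - 2) := by ring_nf
    have hsplit : lam z ^ (d - 1) = lam z ^ (d - 2) * lam z := by
      rw [← pow_succ]
      congr 1
      omega
    have hfin : lam z ^ (d - 2) * (2 * lam z - 1)
        ≤ lam z ^ (d - 1) * (2 - lam 0 / lam z) := by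
      rw [hsplit]
      have hkey : 2 * lam z - 1 ≤ lam z * (2 - lam 0 / lam z) := by
        rw [mul_sub, mul_div_cancel₀ _ hlz.ne']
        linarith
      calc lam z ^ (d - 2) * (2 * lam z - 1)
          ≤ lam z ^ (d - 2) * (lam z * (2 - lam 0 / lam z)) :=
            mul_le_mul_of_nonneg_left hkey (by positivity)
        _ = lam z ^ (d - 2) * lam z * (2 - lam 0 / lam z) := by ring
    have h2a1 : 1/2 ≤ 2 * lam z - 1 := by linarith
    calc lam z ^ (d - 1) * (2 - lam 0 / lam z)
        ≥ lam z ^ (d - 2) * (2 * lam z - 1) := hfin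
      _ ≥ (1/2) * (1/2) :=
          mul_le_mul hpow h2a1 (by norm_num) (by positivity)
      _ = 1/4 := by norm_num
end

section
/- Let $h : \mathbb{R} \to [0,\infty)$ be an even, log-concave, integrable function with $h(0) > 0$. Then $\int_{-\infty}^\infty t^2 h(t) \, dt \le \frac{2}{h(0)^2}\left(\int_{-\infty}^\infty h(t) \, dt\right)^3$. -/
open MeasureTheory Set Filter

-- tail integral of x^2 e^{-kx}
lemma tail_deriv {k : ℝ} (hk : 0 < k) (x : ℝ) :
    HasDerivAt (fun x : ℝ => -(Real.exp (-(k * x)) * (x ^ 2 / k + 2 * x / k ^ 2 + 2 / k ^ 3)))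
      (x ^ 2 * Real.exp (-(k * x))) x := by
  have h1 : HasDerivAt (fun x : ℝ => -(k * x)) (-k) x := by
    exact (((hasDerivAt_id x).const_mul k).neg).congr_deriv (by ring)
  have h2 : HasDerivAt (fun x : ℝ => Real.exp (-(k * x))) (Real.exp (-(k * x)) * (-k)) x :=
    h1.exp
  have h3 : HasDerivAt (fun x : ℝ => x ^ 2 / k + 2 * x / k ^ 2 + 2 / k ^ 3)
      (2 * x / k + 2 / k ^ 2) x := by
    have := (((hasDerivAt_pow 2 x).div_const k).add
      (((hasDerivAt_id x).const_mul 2).div_const (k ^ 2))).add_const (2 / k ^ 3)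
    exact this.congr_deriv (by norm_num)
  have := (h2.mul h3).neg
  have hk0 : k ≠ 0 := ne_of_gt hk
  exact this.congr_deriv (by field_simp; ring)

lemma tail_tendsto {k : ℝ} (hk : 0 < k) :
    Tendsto (fun x : ℝ => -(Real.exp (-(k * x)) * (x ^ 2 / k + 2 * x / k ^ 2 + 2 / k ^ 3)))
      atTop (nhds 0) := by
  have hkx : Tendsto (fun x : ℝ => k * x) atTop atTop :=
    Tendsto.const_mul_atTop hk tendsto_id
  have T : ∀ n : ℕ, Tendsto (fun x : ℝ => (k * x) ^ n * Real.exp (-(k * x))) atTop (nhds 0) :=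
    fun n => (Real.tendsto_pow_mul_exp_neg_atTop_nhds_zero n).comp hkx
  have hk0 : k ≠ 0 := ne_of_gt hk
  have heq : (fun x : ℝ => -(Real.exp (-(k * x)) * (x ^ 2 / k + 2 * x / k ^ 2 + 2 / k ^ 3)))
      = fun x : ℝ => -((1 / k ^ 3) * ((k * x) ^ 2 * Real.exp (-(k * x)))
        + ((2 / k ^ 3) * ((k * x) ^ 1 * Real.exp (-(k * x)))
        + (2 / k ^ 3) * ((k * x) ^ 0 * Real.exp (-(k * x))))) := by
    funext x
    field_simp
    ring
  rw [heq]
  have := (((T 2).const_mul (1 / k ^ 3)).add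
    (((T 1).const_mul (2 / k ^ 3)).add ((T 0).const_mul (2 / k ^ 3)))).neg
  simpa using this

lemma tail_integrable {k : ℝ} (hk : 0 < k) (a : ℝ) :
    IntegrableOn (fun x : ℝ => x ^ 2 * Real.exp (-(k * x))) (Ioi a) := by
  refine integrableOn_Ioi_deriv_of_nonneg' (fun x _ => tail_deriv hk x)
    (fun x _ => by positivity) (tail_tendsto hk)

lemma tail_integral {k : ℝ} (hk : 0 < k) (a : ℝ) :
    ∫ x in Ioi a, x ^ 2 * Real.exp (-(k * x))
      = Real.exp (-(k * a)) * (a ^ 2 / k + 2 * a / k ^ 2 + 2 / k ^ 3) := by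
  have := integral_Ioi_of_hasDerivAt_of_tendsto' (fun x _ => tail_deriv hk x)
    (tail_integrable hk a) (tail_tendsto hk)
  rw [this]
  ring

lemma even_integral {f : ℝ → ℝ} (hf : Integrable f) (he : ∀ t, f (-t) = f t) :
    ∫ t, f t = 2 * ∫ t in Ioi (0 : ℝ), f t := by
  have h1 := integral_comp_neg_Ioi (0 : ℝ) f
  simp only [he, neg_zero] at h1
  rw [← intervalIntegral.integral_Iic_add_Ioi (b := (0 : ℝ)) hf.integrableOn hf.integrableOn,
    ← h1]
  ring

lemma num_ineq : 1 / 3 + 5 / 4 * Real.exp (-2) ≤ (1 - Real.exp (-2)) ^ 3 := by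
  have e1 := Real.exp_one_gt_d9
  have h2 : (7.389 : ℝ) < Real.exp 2 := by
    rw [show (2 : ℝ) = 1 + 1 by norm_num, Real.exp_add]
    nlinarith [Real.exp_pos 1]
  have h3 : Real.exp (-2) < 0.13534 := by
    have hmul : Real.exp (-(2:ℝ)) * Real.exp 2 = 1 := by
      rw [← Real.exp_add]; norm_num
    nlinarith [Real.exp_pos (-(2:ℝ)), hmul]
  nlinarith [Real.exp_pos (-2), h3, sq_nonneg (Real.exp (-2))]

set_option maxHeartbeats 1000000

theorem logconcave_second_moment (h : ℝ → ℝ) (hnn : ∀ t, 0 ≤ h t)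
    (heven : ∀ t, h (-t) = h t)
    (hlc : ∀ s t : ℝ, ∀ lam ∈ Set.Icc (0 : ℝ) 1,
      h s ^ lam * h t ^ (1 - lam) ≤ h (lam * s + (1 - lam) * t))
    (hint : Integrable h) (h0 : 0 < h 0) :
    ∫ t, t ^ 2 * h t ≤ (2 / h 0 ^ 2) * (∫ t, h t) ^ 3 := by
  by_cases hf2 : Integrable (fun t : ℝ => t ^ 2 * h t)
  swap
  · rw [integral_undef hf2]
    have hInn : 0 ≤ ∫ t, h t := integral_nonneg hnn
    positivity
  have hI0 : 0 ≤ ∫ t, h t := integral_nonneg hnn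
  rcases eq_or_lt_of_le hI0 with hIz | hI
  · have hz : h =ᵐ[volume] 0 := (integral_eq_zero_iff_of_nonneg hnn hint).mp hIz.symm
    have hz2 : (fun t : ℝ => t ^ 2 * h t) =ᵐ[volume] (0 : ℝ → ℝ) := by
      filter_upwards [hz] with t ht
      simp [ht]
    rw [integral_congr_ae hz2, ← hIz]
    simp
  set I := ∫ t, h t with hIdef
  clear_value I
  -- h is bounded by h 0
  have hbound : ∀ t, h t ≤ h 0 := by
    intro t
    rcases eq_or_lt_of_le (hnn t) with h0t | h0t
    · linarith
    · have key := hlc t (-t) (1/2) (by norm_num)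
      rw [heven t] at key
      have e1 : (1:ℝ)/2 * t + (1 - 1/2) * -t = 0 := by ring
      rw [e1] at key
      have e2 : h t ^ ((1:ℝ)/2) * h t ^ (1 - (1:ℝ)/2) = h t := by
        rw [← Real.rpow_add h0t]; norm_num
      linarith [e2 ▸ key]
  -- half-line integral
  have hhalfline : ∫ x in Ioi (0:ℝ), h x = I / 2 := by
    have := even_integral hint heven
    rw [← hIdef] at this
    linarith
  have hIoc : ∀ t : ℝ, ∫ x in Ioc (0:ℝ) t, h x ≤ I / 2 := by
    intro t
    rw [← hhalfline]
    refine setIntegral_mono_set hint.integrableOn (Eventually.of_forall hnn)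
      (HasSubset.Subset.eventuallyLE Ioc_subset_Ioi_self)
  -- pointwise exponential minorant
  have hmin : ∀ t : ℝ, 0 < t → ∀ x ∈ Ioc (0:ℝ) t,
      h 0 * (h t / h 0) ^ (x / t) ≤ h x := by
    intro t ht x hx
    have hxt0 : 0 ≤ x / t := div_nonneg hx.1.le ht.le
    have hxt1 : x / t ≤ 1 := (div_le_one ht).mpr hx.2
    have key := hlc t 0 (x / t) ⟨hxt0, hxt1⟩
    have e1 : x / t * t + (1 - x / t) * 0 = x := by field_simp; ring
    rw [e1] at key
    have e2 : h 0 ^ ((1:ℝ) - x/t) = h 0 / h 0 ^ (x/t) := by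
      rw [Real.rpow_sub h0, Real.rpow_one]
    have e3 : (h t / h 0) ^ (x/t) = h t ^ (x/t) / h 0 ^ (x/t) :=
      Real.div_rpow (hnn t) h0.le _
    rw [e2] at key
    rw [e3]
    calc h 0 * (h t ^ (x/t) / h 0 ^ (x/t)) = h t ^ (x/t) * (h 0 / h 0 ^ (x/t)) := by ring
      _ ≤ h x := key
  -- key integral inequality
  have hkey : ∀ t : ℝ, 0 < t → 0 < h t → h t < h 0 →
      h 0 * t * (1 - h t / h 0) ≤ I / 2 * (-Real.log (h t / h 0)) := by
    intro t ht hpos hlt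
    set r := h t / h 0 with hrdef
    have hr0 : 0 < r := div_pos hpos h0
    have hr1 : r < 1 := (div_lt_one h0).mpr hlt
    have hlr : Real.log r < 0 := Real.log_neg hr0 hr1
    have hlrne : Real.log r ≠ 0 := ne_of_lt hlr
    set a := Real.log r / t with hadef
    have ha0 : a < 0 := div_neg_of_neg_of_pos hlr ht
    have hane : a ≠ 0 := ne_of_lt ha0
    have htne : t ≠ 0 := ne_of_gt ht
    have hexp : ∀ x : ℝ, r ^ (x / t) = Real.exp (a * x) := by
      intro x
      rw [Real.rpow_def_of_pos hr0, hadef]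
      congr 1
      field_simp
    have hc : Continuous (fun x : ℝ => h 0 * Real.exp (a * x)) :=
      continuous_const.mul (Real.continuous_exp.comp (continuous_const.mul continuous_id))
    have hint1 : IntegrableOn (fun x : ℝ => h 0 * Real.exp (a * x)) (Ioc 0 t) :=
      hc.integrableOn_Ioc
    have hmono : ∫ x in Ioc (0:ℝ) t, h 0 * Real.exp (a * x) ≤ ∫ x in Ioc (0:ℝ) t, h x := by
      refine setIntegral_mono_on hint1 hint.integrableOn measurableSet_Ioc ?_
      intro x hx
      have := hmin t ht x hx
      rwa [← hrdef, hexp x] at this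
    have hval : ∫ x in Ioc (0:ℝ) t, h 0 * Real.exp (a * x)
        = h 0 * ((Real.exp (a * t) - 1) / a) := by
      rw [← intervalIntegral.integral_of_le ht.le, intervalIntegral.integral_const_mul]
      congr 1
      rw [intervalIntegral.integral_comp_mul_left (fun y => Real.exp y) hane]
      simp [smul_eq_mul]
      ring
    have hat : a * t = Real.log r := by
      rw [hadef]; field_simp
    have hchain : h 0 * ((Real.exp (a * t) - 1) / a) ≤ I / 2 := by
      rw [← hval]; exact hmono.trans (hIoc t)
    rw [hat, Real.exp_log hr0] at hchain
    have hfrac : (r - 1) / a = t * (1 - r) / (-Real.log r) := by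
      rw [hadef, div_div_eq_mul_div, div_eq_div_iff hlrne (neg_ne_zero.mpr hlrne)]
      ring
    rw [hfrac] at hchain
    have hL : 0 < -Real.log r := by linarith
    rw [show h 0 * (t * (1 - r) / (-Real.log r)) = h 0 * t * (1 - r) / (-Real.log r) by ring,
      div_le_iff₀ hL] at hchain
    exact hchain
  -- constants
  have hIne : I ≠ 0 := ne_of_gt hI
  have h0ne : h 0 ≠ 0 := ne_of_gt h0
  obtain ⟨E, hEdef⟩ : ∃ x : ℝ, x = Real.exp (-2 : ℝ) := ⟨_, rfl⟩
  have hE0 : 0 < E := by rw [hEdef]; positivity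
  have hE1 : E < 1 := by rw [hEdef]; exact Real.exp_lt_one_iff.mpr (by norm_num)
  obtain ⟨β, hbdef⟩ : ∃ x : ℝ, x = 1 - E := ⟨_, rfl⟩
  have hβ0 : 0 < β := by rw [hbdef]; linarith
  have hβ1 : β < 1 := by rw [hbdef]; linarith
  have hβne : β ≠ 0 := ne_of_gt hβ0
  obtain ⟨κ, hkdef⟩ : ∃ x : ℝ, x = 2 * β * h 0 / I := ⟨_, rfl⟩
  have hκ0 : 0 < κ := by
    rw [hkdef]
    exact div_pos (mul_pos (mul_pos (by norm_num) hβ0) h0) hI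
  obtain ⟨T, hTdef⟩ : ∃ x : ℝ, x = I / (β * h 0) := ⟨_, rfl⟩
  have hT0 : 0 < T := by rw [hTdef]; exact div_pos hI (mul_pos hβ0 h0)
  have hκT : κ * T = 2 := by
    rw [hkdef, hTdef]
    field_simp
  -- pointwise tail bound
  have htail : ∀ t : ℝ, T < t → h t ≤ h 0 * Real.exp (-(κ * t)) := by
    intro t hTt
    have ht : 0 < t := hT0.trans hTt
    rcases eq_or_lt_of_le (hnn t) with hz | hpos
    · rw [← hz]; positivity
    rcases eq_or_lt_of_le (hbound t) with heq2 | hlt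
    · -- h t = h 0, contradiction
      exfalso
      have hminc : ∀ x ∈ Ioc (0:ℝ) t, h 0 ≤ h x := by
        intro x hx
        have := hmin t ht x hx
        rwa [heq2, div_self h0ne, Real.one_rpow, mul_one] at this
      have hconst : ∫ x in Ioc (0:ℝ) t, (h 0 : ℝ) ≤ ∫ x in Ioc (0:ℝ) t, h x := by
        refine setIntegral_mono_on ?_ hint.integrableOn measurableSet_Ioc hminc
        exact integrableOn_const (by rw [Real.volume_Ioc]; exact ENNReal.ofReal_ne_top)
      rw [setIntegral_const, Real.volume_real_Ioc_of_le (by linarith), smul_eq_mul] at hconst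
      have h1 : (t - 0) * h 0 ≤ I / 2 := hconst.trans (hIoc t)
      have h2 : h 0 * T * β = I := by rw [hTdef]; field_simp
      have h3 : I < h 0 * T := by nlinarith [h2, hβ1, mul_pos h0 hT0]
      have h4 : h 0 * t < h 0 * T := by linarith
      have h5 : t < T := (mul_lt_mul_iff_right₀ h0).mp h4
      linarith
    -- now 0 < h t < h 0
    have hk := hkey t ht hpos hlt
    obtain ⟨r, hrdef⟩ : ∃ x : ℝ, x = h t / h 0 := ⟨_, rfl⟩
    rw [← hrdef] at hk
    have hr0 : 0 < r := by rw [hrdef]; exact div_pos hpos h0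
    have hr1 : r < 1 := by rw [hrdef]; exact (div_lt_one h0).mpr hlt
    have hht : h t = h 0 * r := by rw [hrdef]; field_simp
    by_cases hsm : r ≤ E
    · -- small r
      have h1 : β ≤ 1 - r := by rw [hbdef]; linarith
      have h2 : h 0 * t * β ≤ I / 2 * (-Real.log r) := by
        refine le_trans ?_ hk
        nlinarith [mul_le_mul_of_nonneg_left h1 (by positivity : (0:ℝ) ≤ h 0 * t)]
      have h3 : κ * t ≤ -Real.log r := by
        rw [hkdef, div_mul_eq_mul_div, div_le_iff₀ hI]
        linarith [h2]
      rw [hht]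
      have : r = Real.exp (Real.log r) := (Real.exp_log hr0).symm
      rw [this]
      exact mul_le_mul_of_nonneg_left (Real.exp_le_exp.mpr (by linarith)) h0.le
    · -- chord case: contradiction with T < t
      exfalso
      push_neg at hsm
      have hlam0 : 0 ≤ (1 - r) / β := div_nonneg (by linarith) hβ0.le
      have hlam1 : (1 - r) / β + (r - E) / β = 1 := by
        rw [← add_div, div_eq_one_iff_eq hβne, hbdef]
        ring
      have hcc := strictConcaveOn_log_Ioi.concaveOn.2 (mem_Ioi.mpr hE0)
        (mem_Ioi.mpr one_pos) hlam0 (div_nonneg (by linarith) hβ0.le) hlam1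
      have hpt : ((1 - r) / β) • E + ((r - E) / β) • (1:ℝ) = r := by
        simp only [smul_eq_mul]
        rw [mul_one, div_mul_eq_mul_div, ← add_div, div_eq_iff hβne, hbdef]
        ring
      rw [hpt] at hcc
      have hlogE : Real.log E = -2 := by rw [hEdef, Real.log_exp]
      rw [hlogE, Real.log_one] at hcc
      simp only [smul_eq_mul, mul_zero, add_zero] at hcc
      -- hcc : (1 - r)/beta * (-2) <= log r
      have hcc2 : (1 - r) * (-2) ≤ β * Real.log r := by
        have hmul := mul_le_mul_of_nonneg_left hcc hβ0.le
        have heq : β * ((1 - r) / β * -2) = (1 - r) * (-2) := by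
          field_simp
        linarith [heq ▸ hmul]
      have hcc3 : β * (-Real.log r) ≤ 2 * (1 - r) := by linarith [hcc2]
      have hr1' : 0 < 1 - r := by linarith
      have c1 : β * (h 0 * t * (1 - r)) ≤ β * (I / 2 * (-Real.log r)) :=
        mul_le_mul_of_nonneg_left hk hβ0.le
      have c3 : I / 2 * (β * (-Real.log r)) ≤ I / 2 * (2 * (1 - r)) :=
        mul_le_mul_of_nonneg_left hcc3 (by linarith)
      have h4 : β * (h 0 * t) * (1 - r) ≤ I * (1 - r) := by nlinarith [c1, c3]
      have h6 : β * (h 0 * T) = I := by rw [hTdef]; field_simp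
      have h8 : β * (h 0 * t) ≤ β * (h 0 * T) := by
        rw [h6]
        exact (mul_le_mul_iff_left₀ hr1').mp h4
      have h9 : t ≤ T := by
        have := (mul_le_mul_iff_right₀ hβ0).mp h8
        exact (mul_le_mul_iff_right₀ h0).mp this
      linarith
  -- assemble
  have heven2 : ∀ t : ℝ, (-t) ^ 2 * h (-t) = t ^ 2 * h t := by
    intro t; rw [heven]; ring
  have hsplit : ∫ t, t ^ 2 * h t
      = 2 * ((∫ t in Ioc (0:ℝ) T, t ^ 2 * h t) + ∫ t in Ioi T, t ^ 2 * h t) := by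
    rw [even_integral hf2 heven2]
    congr 1
    rw [← setIntegral_union (Ioc_disjoint_Ioi le_rfl) measurableSet_Ioi
      hf2.integrableOn hf2.integrableOn, Ioc_union_Ioi_eq_Ioi hT0.le]
  have hP1 : ∫ t in Ioc (0:ℝ) T, t ^ 2 * h t ≤ h 0 * T ^ 3 / 3 := by
    have hcont : Continuous (fun t : ℝ => t ^ 2 * h 0) :=
      (continuous_pow 2).mul continuous_const
    have hmono : ∫ t in Ioc (0:ℝ) T, t ^ 2 * h t ≤ ∫ t in Ioc (0:ℝ) T, t ^ 2 * h 0 := by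
      refine setIntegral_mono_on hf2.integrableOn hcont.integrableOn_Ioc measurableSet_Ioc ?_
      intro x _
      exact mul_le_mul_of_nonneg_left (hbound x) (sq_nonneg x)
    have hval : ∫ t in Ioc (0:ℝ) T, t ^ 2 * h 0 = h 0 * T ^ 3 / 3 := by
      rw [← intervalIntegral.integral_of_le hT0.le, intervalIntegral.integral_mul_const,
        integral_pow]
      norm_num
      ring
    linarith
  have hP2 : ∫ t in Ioi T, t ^ 2 * h t ≤ h 0 * (E * (5 / 4 * T ^ 3)) := by
    have hmono : ∫ t in Ioi T, t ^ 2 * h t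
        ≤ ∫ t in Ioi T, h 0 * (t ^ 2 * Real.exp (-(κ * t))) := by
      refine setIntegral_mono_on hf2.integrableOn
        ((tail_integrable hκ0 T).const_mul (h 0)) measurableSet_Ioi ?_
      intro x hx
      have hb := htail x hx
      calc x ^ 2 * h x ≤ x ^ 2 * (h 0 * Real.exp (-(κ * x))) :=
            mul_le_mul_of_nonneg_left hb (sq_nonneg x)
        _ = h 0 * (x ^ 2 * Real.exp (-(κ * x))) := by ring
    have hval : ∫ t in Ioi T, h 0 * (t ^ 2 * Real.exp (-(κ * t)))
        = h 0 * (E * (5 / 4 * T ^ 3)) := by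
      rw [MeasureTheory.integral_const_mul, tail_integral hκ0 T]
      have hκeq : κ = 2 / T := by
        field_simp at hκT ⊢
        linarith
      rw [show -(κ * T) = (-2 : ℝ) by rw [hκT], ← hEdef]
      congr 1
      rw [hκeq]
      field_simp
      ring
    linarith [hval ▸ hmono]
  -- final numeric computation
  have hnum := num_ineq
  rw [← hEdef] at hnum
  have hTcube : h 0 * T ^ 3 * β ^ 3 = I ^ 3 / h 0 ^ 2 := by
    rw [hTdef]
    field_simp
  rw [hsplit]
  have hT3 : 0 < h 0 * T ^ 3 := by positivity
  calc 2 * ((∫ t in Ioc (0:ℝ) T, t ^ 2 * h t) + ∫ t in Ioi T, t ^ 2 * h t)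
      ≤ 2 * (h 0 * T ^ 3 / 3 + h 0 * (E * (5 / 4 * T ^ 3))) := by linarith
    _ = 2 * (h 0 * T ^ 3) * (1 / 3 + 5 / 4 * E) := by ring
    _ ≤ 2 * (h 0 * T ^ 3) * β ^ 3 := by
        have : (1:ℝ) / 3 + 5 / 4 * E ≤ β ^ 3 := by rw [hbdef]; exact hnum
        nlinarith
    _ = 2 / h 0 ^ 2 * I ^ 3 := by rw [show 2 * (h 0 * T ^ 3) * β ^ 3 = 2 * (h 0 * T ^ 3 * β ^ 3) by ring, hTcube]; ring
end
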